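/- arXiv:1712.01820 — 13 statements merged into one kernel-verified Lean document; each statement's English description precedes it below -/
import Mathlib

section
/- Let U = (u_{ij})_{i,j∈{1,2,3}} be a 3×3 magic unitary over a unital C*-algebra A. Then all entries of U pairwise commute: u_{ij}·u_{kl} = u_{kl}·u_{ij} for all i, j, k, l ∈ {1,2,3}. -/
/-- The third element of `Fin 3` distinct from two given distinct elements. -/
def mu3third (a b : Fin 3) : Fin 3 := ⟨(3 - a.val - b.val) % 3, Nat.mod_lt _ (by omega)⟩

lemma mu3third_ne_left : ∀ a b : Fin 3, a ≠ b → mu3third a b ≠ a := by decide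

lemma mu3third_ne_right : ∀ a b : Fin 3, a ≠ b → mu3third a b ≠ b := by decide

lemma mu3sum_three {M : Type*} [AddCommMonoid M] (f : Fin 3 → M) {a b : Fin 3} (h : a ≠ b) :
    ∑ x, f x = f a + f b + f (mu3third a b) := by
  fin_cases a <;> fin_cases b <;>
    simp_all [Fin.sum_univ_three, mu3third] <;> abel

lemma mu3proj_nonneg {A : Type*} [CStarAlgebra A] [PartialOrder A] [StarOrderedRing A] {p : A}
    (hs : star p = p) (h2 : p * p = p) : (0:A) ≤ p := by
  calc (0:A) ≤ star p * p := star_mul_self_nonneg p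
    _ = p := by rw [hs, h2]

/-- Two projections whose sum is `≤ 1` are orthogonal. -/
lemma mu3proj_orth {A : Type*} [CStarAlgebra A] [PartialOrder A] [StarOrderedRing A] {p q : A}
    (hps : star p = p) (hp2 : p * p = p)
    (hqs : star q = q) (hq2 : q * q = q) (h : p + q ≤ 1) : p * q = 0 := by
  have hq' : q ≤ 1 - p := by rwa [le_sub_iff_add_le, add_comm]
  have h1 : p * q * p ≤ 0 := by
    have := star_left_conjugate_le_conjugate hq' p
    rw [hps] at this
    calc p * q * p ≤ p * (1 - p) * p := this
      _ = 0 := by rw [mul_one_sub, hp2, sub_self, zero_mul]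
  have h2 : (0:A) ≤ p * q * p := by
    have := star_mul_self_nonneg (q * p)
    rw [star_mul, hqs, hps] at this
    calc (0:A) ≤ p * q * (q * p) := this
      _ = p * q * p := by rw [← mul_assoc, mul_assoc p q q, hq2]
  have h0 : p * q * p = 0 := le_antisymm h1 h2
  have hqp : q * p = 0 := by
    rw [← CStarRing.star_mul_self_eq_zero_iff (q * p)]
    rw [star_mul, hqs, hps, ← mul_assoc, mul_assoc p q q, hq2, h0]
  calc p * q = star (q * p) := by rw [star_mul, hqs, hps]
    _ = 0 := by rw [hqp, star_zero]

/-- The entries of any `3 × 3` magic unitary over a unital C*-algebra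
pairwise commute. -/
theorem magicUnitary_three_commutes {A : Type*} [CStarAlgebra A]
    (u : Fin 3 → Fin 3 → A)
    (hstar : ∀ i j, star (u i j) = u i j)
    (hidem : ∀ i j, u i j * u i j = u i j)
    (hrow : ∀ i, ∑ j, u i j = 1)
    (hcol : ∀ j, ∑ i, u i j = 1) :
    ∀ i j k l, u i j * u k l = u k l * u i j := by
  letI : PartialOrder A := CStarAlgebra.spectralOrder A
  haveI : StarOrderedRing A := CStarAlgebra.spectralOrderedRing A
  have hnn : ∀ i j, (0:A) ≤ u i j := fun i j => mu3proj_nonneg (hstar i j) (hidem i j)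
  -- entries in the same row are orthogonal
  have hrow0 : ∀ i j l, j ≠ l → u i j * u i l = 0 := by
    intro i j l hjl
    apply mu3proj_orth (hstar i j) (hidem i j) (hstar i l) (hidem i l)
    have h1 := hrow i
    rw [mu3sum_three (fun x => u i x) hjl] at h1
    calc u i j + u i l ≤ u i j + u i l + u i (mu3third j l) :=
          le_add_of_nonneg_right (hnn _ _)
      _ = 1 := h1
  -- entries in the same column are orthogonal
  have hcol0 : ∀ j i k, i ≠ k → u i j * u k j = 0 := by
    intro j i k hik
    apply mu3proj_orth (hstar i j) (hidem i j) (hstar k j) (hidem k j)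
    have h1 := hcol j
    rw [mu3sum_three (fun x => u x j) hik] at h1
    calc u i j + u k j ≤ u i j + u k j + u (mu3third i k) j :=
          le_add_of_nonneg_right (hnn _ _)
      _ = 1 := h1
  -- key lemma for general position
  have key : ∀ i j k l, i ≠ k → j ≠ l → u i j * u k l = u i j * u k l * u i j := by
    intro i j k l hik hjl
    set m := mu3third j l with hm
    have hmj : m ≠ j := mu3third_ne_left j l hjl
    have hml : m ≠ l := mu3third_ne_right j l hjl
    have expand : u k l = 1 - u k j - u k m := by
      have h1 := hrow k
      rw [mu3sum_three (fun x => u k x) hjl] at h1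
      rw [← h1]; abel
    have t2 : u i j * u k l * u i l = 0 := by
      rw [mul_assoc, hcol0 l k i (Ne.symm hik), mul_zero]
    have t3 : u i j * u k l * u i m = 0 := by
      have e1 : (1 - u k j - u k m) * u i m = u i m - u k j * u i m := by
        rw [sub_mul, sub_mul, one_mul, hcol0 m k i (Ne.symm hik), sub_zero]
      rw [expand, mul_assoc, e1, mul_sub, hrow0 i j m (Ne.symm hmj), ← mul_assoc,
        hcol0 j i k hik, zero_mul, sub_zero]
    conv_lhs => rw [← mul_one (u i j * u k l), ← hrow i,
      mu3sum_three (fun x => u i x) hjl]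
    rw [mul_add, mul_add, t2, t3, add_zero, add_zero]
  intro i j k l
  by_cases hik : i = k
  · subst hik
    by_cases hjl : j = l
    · subst hjl; rfl
    · rw [hrow0 i j l hjl, hrow0 i l j (Ne.symm hjl)]
  · by_cases hjl : j = l
    · subst hjl
      rw [hcol0 j i k hik, hcol0 j k i (Ne.symm hik)]
    · have hk := key i j k l hik hjl
      calc u i j * u k l = u i j * u k l * u i j := hk
        _ = star (u i j * u k l * u i j) := by
            simp [star_mul, hstar, mul_assoc]
        _ = star (u i j * u k l) := by rw [← hk]
        _ = u k l * u i j := by rw [star_mul, hstar, hstar]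
end

section
/- Let A be a unital C*-algebra, X a finite set, and U = (u_{xy})_{x,y∈X} a magic unitary over A. Suppose there exist: (i) a unital ℂ-algebra homomorphism ε : A → ℂ with ε(u_{xy}) = 1 if x = y and ε(u_{xy}) = 0 otherwise; (ii) an additive map S : A → A satisfying S(ab) = S(b)S(a) for all a, b ∈ A and S(u_{xy}) = u_{yx} for all x, y ∈ X; (iii) a unital ℂ-algebra homomorphism Δ : A → A ⊗_ℂ A (the algebraic tensor product over ℂ) with Δ(u_{xz}) = ∑_{w∈X} u_{xw} ⊗ u_{wz} for all x, z ∈ X. Then the relation ∼₁ on X defined by x ∼₁ y if and only if u_{xy} ≠ 0 is an equivalence relation (reflexive, symmetric, and transitive). -/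
open scoped TensorProduct

/-- Given a magic unitary `u` over a unital C*-algebra, together with a
counit `ε`, an antipode `S`, and a comultiplication `Δ` acting on the generators in the
standard way, the relation `x ∼₁ y ↔ u x y ≠ 0` is an equivalence relation. -/
theorem orbit_relation_is_equivalence {A : Type*} [CStarAlgebra A] {X : Type*}
    [Fintype X] [DecidableEq X] (u : X → X → A)
    (hstar : ∀ x y, star (u x y) = u x y)
    (hidem : ∀ x y, u x y * u x y = u x y)
    (hrow : ∀ x, ∑ y, u x y = 1)
    (hcol : ∀ x, ∑ y, u y x = 1)
    (ε : A →ₐ[ℂ] ℂ)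
    (hε : ∀ x y, ε (u x y) = if x = y then 1 else 0)
    (S : A → A)
    (hSadd : ∀ a b, S (a + b) = S a + S b)
    (hSmul : ∀ a b, S (a * b) = S b * S a)
    (hSu : ∀ x y, S (u x y) = u y x)
    (Δ : A →ₐ[ℂ] A ⊗[ℂ] A)
    (hΔ : ∀ x z, Δ (u x z) = ∑ w, u x w ⊗ₜ[ℂ] u w z) :
    Equivalence (fun x y : X => u x y ≠ 0) := by
  -- S kills 0
  have hS0 : S 0 = 0 := by
    have h := hSadd 0 0
    rw [add_zero] at h
    exact left_eq_add.mp h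
  -- row orthogonality: distinct entries in the same row are orthogonal projections
  have horth : ∀ x y w, y ≠ w → u x y * u x w = 0 := by
    intro x y w hyw
    letI := CStarAlgebra.spectralOrder A
    haveI := CStarAlgebra.spectralOrderedRing A
    have h1 : ∑ w', u x y * (u x w' * u x y) = u x y := by
      rw [← Finset.mul_sum, ← Finset.sum_mul, hrow, one_mul, hidem]
    have h2 : ∑ w' ∈ Finset.univ.erase y, u x y * (u x w' * u x y) = 0 := by
      have h3 := Finset.add_sum_erase Finset.univ
        (fun w' => u x y * (u x w' * u x y)) (Finset.mem_univ y)
      simp only [hidem] at h3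
      rw [h1] at h3
      exact add_eq_left.mp h3
    have hterm : ∀ w', u x y * (u x w' * u x y) =
        star (u x w' * u x y) * (u x w' * u x y) := by
      intro w'
      rw [star_mul, hstar, hstar]
      rw [show u x y * u x w' * (u x w' * u x y)
            = u x y * ((u x w' * u x w') * u x y) by noncomm_ring, hidem]
    have hnn : ∀ w' ∈ Finset.univ.erase y, 0 ≤ u x y * (u x w' * u x y) := by
      intro w' _
      rw [hterm]
      exact star_mul_self_nonneg _
    have hw0 : u x y * (u x w * u x y) = 0 :=
      (Finset.sum_eq_zero_iff_of_nonneg hnn).mp h2 w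
        (Finset.mem_erase.mpr ⟨fun h => hyw h.symm, Finset.mem_univ w⟩)
    rw [hterm] at hw0
    have : u x w * u x y = 0 := by
      exact (CStarRing.star_mul_self_eq_zero_iff _).mp hw0
    calc u x y * u x w = star (u x w * u x y) := by rw [star_mul, hstar, hstar]
    _ = 0 := by rw [this, star_zero]
  -- a simple tensor over ℂ vanishes iff a factor vanishes
  have htmul : ∀ a b : A, a ⊗ₜ[ℂ] b = 0 → a = 0 ∨ b = 0 := by
    intro a b hab
    by_contra hcon
    push_neg at hcon
    obtain ⟨ha, hb⟩ := hcon
    have ha' := mt (Module.forall_dual_apply_eq_zero_iff ℂ a).mp ha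
    push_neg at ha'
    obtain ⟨φ, hφ⟩ := ha'
    have := congrArg (fun t => (TensorProduct.lid ℂ A) (LinearMap.rTensor A φ t)) hab
    simp only [LinearMap.rTensor_tmul, TensorProduct.lid_tmul, map_zero] at this
    rcases smul_eq_zero.mp this with h | h
    · exact hφ h
    · exact hb h
  constructor
  · -- reflexivity
    intro x h0
    have h := hε x x
    rw [h0, map_zero] at h
    simp at h
  · -- symmetry
    intro x y hxy h0
    apply hxy
    have := hSu y x
    rw [h0, hS0] at this
    exact this.symm
  · -- transitivity
    intro x y z hxy hyz hxz
    have h0 : (∑ w, u x w ⊗ₜ[ℂ] u w z) = 0 := by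
      rw [← hΔ, hxz, map_zero]
    have key : (u x y ⊗ₜ[ℂ] u y z) *
        (∑ w, u x w ⊗ₜ[ℂ] u w z) * (u x y ⊗ₜ[ℂ] u y z) = u x y ⊗ₜ[ℂ] u y z := by
      rw [Finset.mul_sum, Finset.sum_mul]
      rw [Finset.sum_eq_single y]
      · rw [Algebra.TensorProduct.tmul_mul_tmul, Algebra.TensorProduct.tmul_mul_tmul,
          hidem, hidem, hidem, hidem]
      · intro w _ hwy
        rw [Algebra.TensorProduct.tmul_mul_tmul, horth x y w (fun h => hwy h.symm),
          TensorProduct.zero_tmul, zero_mul]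
      · intro h
        exact absurd (Finset.mem_univ y) h
    rw [h0, mul_zero, zero_mul] at key
    rcases htmul _ _ key.symm with h | h
    · exact hxy h
    · exact hyz h
end

section
/- Let A be a unital C*-algebra, X a finite set, and U = (u_{xy})_{x,y∈X} a magic unitary over A. Suppose there exist: (i) a unital ℂ-algebra homomorphism ε : A → ℂ with ε(u_{xy}) = 1 if x = y and ε(u_{xy}) = 0 otherwise; (ii) an additive map S : A → A satisfying S(ab) = S(b)S(a) for all a, b ∈ A and S(u_{xy}) = u_{yx} for all x, y ∈ X; (iii) a unital ℂ-algebra homomorphism Δ : A → A ⊗_ℂ A with Δ(u_{xz}) = ∑_{w∈X} u_{xw} ⊗ u_{wz} for all x, z ∈ X. Then the relation ∼₂ on X × X defined by (x,x') ∼₂ (y,y') if and only if u_{xy}·u_{x'y'} ≠ 0 is an equivalence relation (reflexive, symmetric, and transitive). -/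
open scoped TensorProduct

/-- If a tensor of two vectors over a field vanishes, one factor vanishes. -/
lemma tmul_eq_zero_aux {A : Type*} [AddCommGroup A] [Module ℂ A]
    {a b : A} (h : a ⊗ₜ[ℂ] b = 0) (ha : a ≠ 0) : b = 0 := by
  obtain ⟨f, hf⟩ : ∃ f : Module.Dual ℂ A, f a ≠ 0 := by
    by_contra hc
    push_neg at hc
    exact ha ((Module.forall_dual_apply_eq_zero_iff ℂ a).mp hc)
  have := congrArg (fun t => (TensorProduct.lid ℂ A) ((LinearMap.rTensor A f) t)) h
  simp only [LinearMap.rTensor_tmul, TensorProduct.lid_tmul, map_zero] at this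
  exact (smul_eq_zero_iff_right hf).mp this

/-- Projections summing to one in a C*-algebra are pairwise orthogonal. -/
lemma proj_orth {A : Type*} [CStarAlgebra A] {X : Type*} [Fintype X] [DecidableEq X]
    (p : X → A) (hstar : ∀ i, star (p i) = p i) (hidem : ∀ i, p i * p i = p i)
    (hsum : ∑ i, p i = 1) {i j : X} (hij : i ≠ j) : p i * p j = 0 := by
  letI := CStarAlgebra.spectralOrder A
  haveI := CStarAlgebra.spectralOrderedRing A
  have key : ∑ k, p j * p k * p j = p j := by
    rw [← Finset.sum_mul, ← Finset.mul_sum, hsum, mul_one, hidem]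
  have hrest : ∑ k ∈ Finset.univ.erase j, p j * p k * p j = 0 := by
    have h1 := Finset.add_sum_erase Finset.univ (fun k => p j * p k * p j) (Finset.mem_univ j)
    simp only [hidem] at h1
    rw [key] at h1
    exact add_eq_left.mp h1
  have hterm : ∀ k ∈ Finset.univ.erase j, p j * p k * p j = 0 := by
    rw [← Finset.sum_eq_zero_iff_of_nonneg]
    · exact hrest
    · intro k _
      have e : star (p k * p j) * (p k * p j) = p j * p k * p j := by
        rw [star_mul, hstar, hstar, mul_assoc, ← mul_assoc (p k), hidem, ← mul_assoc]
      rw [← e]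
      exact star_mul_self_nonneg _
  have hi : p j * p i * p j = 0 := hterm i (Finset.mem_erase.mpr ⟨hij, Finset.mem_univ i⟩)
  have : star (p i * p j) * (p i * p j) = 0 := by
    rw [star_mul, hstar, hstar, mul_assoc, ← mul_assoc (p i), hidem, ← mul_assoc]
    exact hi
  have := CStarRing.star_mul_self_eq_zero_iff (p i * p j) |>.mp this
  exact this

/-- Given a magic unitary `u` over a unital C*-algebra, together with a
counit `ε`, an antipode `S`, and a comultiplication `Δ` acting on the generators in the
standard way, the relation `(x,x') ∼₂ (y,y') ↔ u x y * u x' y' ≠ 0` on `X × X` is an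
equivalence relation. -/
theorem orbital_relation_is_equivalence {A : Type*} [CStarAlgebra A] {X : Type*}
    [Fintype X] [DecidableEq X] (u : X → X → A)
    (hstar : ∀ x y, star (u x y) = u x y)
    (hidem : ∀ x y, u x y * u x y = u x y)
    (hrow : ∀ x, ∑ y, u x y = 1)
    (hcol : ∀ x, ∑ y, u y x = 1)
    (ε : A →ₐ[ℂ] ℂ)
    (hε : ∀ x y, ε (u x y) = if x = y then 1 else 0)
    (S : A → A)
    (hSadd : ∀ a b, S (a + b) = S a + S b)
    (hSmul : ∀ a b, S (a * b) = S b * S a)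
    (hSu : ∀ x y, S (u x y) = u y x)
    (Δ : A →ₐ[ℂ] A ⊗[ℂ] A)
    (hΔ : ∀ x z, Δ (u x z) = ∑ w, u x w ⊗ₜ[ℂ] u w z) :
    Equivalence (fun p q : X × X => u p.1 q.1 * u p.2 q.2 ≠ 0) := by
  have rowOrth : ∀ x {w y : X}, w ≠ y → u x w * u x y = 0 := fun x _ _ h =>
    proj_orth (u x) (hstar x) (hidem x) (hrow x) h
  constructor
  · -- reflexivity
    rintro ⟨x, x'⟩ h
    have := congrArg ε h
    rw [map_mul, hε, hε, map_zero, if_pos rfl, if_pos rfl, mul_one] at this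
    exact one_ne_zero this
  · -- symmetry
    rintro ⟨x, x'⟩ ⟨y, y'⟩ h h0
    apply h
    have hS0 : S 0 = 0 := by
      have := hSadd 0 0
      rw [add_zero] at this
      exact right_eq_add.mp this
    have : u x' y' * u x y = 0 := by
      have := congrArg S h0
      rwa [hSmul, hSu, hSu, hS0] at this
    have := congrArg star this
    rwa [star_mul, hstar, hstar, star_zero] at this
  · -- transitivity
    rintro ⟨x, x'⟩ ⟨y, y'⟩ ⟨z, z'⟩ h1 h2 h0
    -- (u x y ⊗ u y z) * Δ (u x z) = u x y ⊗ u y z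
    have hL : (u x y ⊗ₜ[ℂ] u y z) * Δ (u x z) = u x y ⊗ₜ[ℂ] u y z := by
      rw [hΔ, Finset.mul_sum]
      rw [Finset.sum_eq_single y]
      · rw [Algebra.TensorProduct.tmul_mul_tmul, hidem, hidem]
      · intro w _ hw
        rw [Algebra.TensorProduct.tmul_mul_tmul, rowOrth x (Ne.symm hw),
          TensorProduct.zero_tmul]
      · intro h; exact absurd (Finset.mem_univ y) h
    -- Δ (u x' z') * (u x' y' ⊗ u y' z') = u x' y' ⊗ u y' z'
    have hR : Δ (u x' z') * (u x' y' ⊗ₜ[ℂ] u y' z') = u x' y' ⊗ₜ[ℂ] u y' z' := by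
      rw [hΔ, Finset.sum_mul]
      rw [Finset.sum_eq_single y']
      · rw [Algebra.TensorProduct.tmul_mul_tmul, hidem, hidem]
      · intro w _ hw
        rw [Algebra.TensorProduct.tmul_mul_tmul, rowOrth x' hw, TensorProduct.zero_tmul]
      · intro h; exact absurd (Finset.mem_univ y') h
    have hmid : Δ (u x z) * Δ (u x' z') = 0 := by
      rw [← map_mul, h0, map_zero]
    have key : (u x y * u x' y') ⊗ₜ[ℂ] (u y z * u y' z') = 0 := by
      calc (u x y * u x' y') ⊗ₜ[ℂ] (u y z * u y' z')
          = (u x y ⊗ₜ[ℂ] u y z) * (u x' y' ⊗ₜ[ℂ] u y' z') := by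
            rw [Algebra.TensorProduct.tmul_mul_tmul]
        _ = ((u x y ⊗ₜ[ℂ] u y z) * Δ (u x z)) * (Δ (u x' z') * (u x' y' ⊗ₜ[ℂ] u y' z')) := by
            rw [hL, hR]
        _ = (u x y ⊗ₜ[ℂ] u y z) * (Δ (u x z) * Δ (u x' z')) * (u x' y' ⊗ₜ[ℂ] u y' z') := by
            simp only [mul_assoc]
        _ = 0 := by rw [hmid, mul_zero, zero_mul]
    exact h2 (tmul_eq_zero_aux key h1)
end

section
/- Let A be a unital C*-algebra, X a finite set, U = (u_{xy})_{x,y∈X} a magic unitary over A, and f : X × X → ℂ. Then the following are equivalent: (i) ∑_{x,x'∈X} f(x,x')·u_{yx}·u_{y'x'} = f(y,y')·1 in A for all y, y' ∈ X; (ii) f(x,x') = f(y,y') whenever u_{yx}·u_{y'x'} ≠ 0. -/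
section aux

variable {A : Type*} [CStarAlgebra A] {X : Type*} [Fintype X] [DecidableEq X]

/-- Projections summing to 1 are pairwise orthogonal. -/
lemma magic_row_orth (u : X → X → A)
    (hstar : ∀ x y, star (u x y) = u x y)
    (hidem : ∀ x y, u x y * u x y = u x y)
    (hrow : ∀ x, ∑ y, u x y = 1) :
    ∀ y a b, a ≠ b → u y a * u y b = 0 := by
  letI := CStarAlgebra.spectralOrder A
  haveI := CStarAlgebra.spectralOrderedRing A
  intro y a b hab
  have h1 : ∑ c, u y b * u y c * u y b = u y b := by
    rw [← Finset.sum_mul, ← Finset.mul_sum, hrow, mul_one, hidem]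
  have h2 : ∑ c ∈ Finset.univ.erase b, u y b * u y c * u y b = 0 := by
    have h3 := Finset.sum_erase_add Finset.univ (fun c => u y b * u y c * u y b)
      (Finset.mem_univ b)
    rw [h1] at h3
    have hb : u y b * u y b * u y b = u y b := by rw [hidem, hidem]
    simp only [hb] at h3
    exact add_eq_right.mp h3
  have hterm : ∀ c, u y b * u y c * u y b = star (u y c * u y b) * (u y c * u y b) := by
    intro c
    rw [star_mul, hstar, hstar]
    calc u y b * u y c * u y b = u y b * (u y c * u y c) * u y b := by rw [hidem]
    _ = u y b * u y c * (u y c * u y b) := by simp only [mul_assoc]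
  have hnn : ∀ c ∈ Finset.univ.erase b, (0 : A) ≤ u y b * u y c * u y b := by
    intro c _
    rw [hterm c]
    exact star_mul_self_nonneg _
  have hz := (Finset.sum_eq_zero_iff_of_nonneg hnn).mp h2 a
    (Finset.mem_erase.mpr ⟨hab, Finset.mem_univ a⟩)
  rw [hterm a] at hz
  exact CStarRing.star_mul_self_eq_zero_iff _ |>.mp hz

end aux

/-- For a magic unitary `u` over a unital C*-algebra and `f : X × X → ℂ`,
`f` is a fixed vector of the tensor square of the universal action if and only if `f` is
constant on the orbitals (`f (x,x') = f (y,y')` whenever `u y x * u y' x' ≠ 0`). -/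
theorem fixed_vector_iff_constant_on_orbitals {A : Type*} [CStarAlgebra A] {X : Type*}
    [Fintype X] [DecidableEq X] (u : X → X → A)
    (hstar : ∀ x y, star (u x y) = u x y)
    (hidem : ∀ x y, u x y * u x y = u x y)
    (hrow : ∀ x, ∑ y, u x y = 1)
    (hcol : ∀ x, ∑ y, u y x = 1)
    (f : X × X → ℂ) :
    (∀ y y', ∑ x, ∑ x', f (x, x') • (u y x * u y' x') = f (y, y') • (1 : A)) ↔
      (∀ x x' y y', u y x * u y' x' ≠ 0 → f (x, x') = f (y, y')) := by
  have orth := magic_row_orth u hstar hidem hrow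
  constructor
  · intro hfix x x' y y' hne
    have key := hfix y y'
    have hprod : ∀ a a', u y x * (u y a * u y' a') * u y' x'
        = (u y x * u y a) * (u y' a' * u y' x') := by
      intro a a'; simp only [mul_assoc]
    have hL : ∀ a a', u y x * (f (a, a') • (u y a * u y' a')) * u y' x'
        = (if a = x ∧ a' = x' then f (x, x') • (u y x * u y' x') else 0) := by
      intro a a'
      rw [mul_smul_comm, smul_mul_assoc, hprod]
      by_cases ha : a = x
      · by_cases ha' : a' = x'
        · subst ha; subst ha'
          rw [if_pos ⟨rfl, rfl⟩, hidem, hidem]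
        · rw [if_neg (by tauto), orth y' a' x' ha', mul_zero, smul_zero]
      · rw [if_neg (by tauto), orth y x a (Ne.symm ha), zero_mul, smul_zero]
    have hsum : u y x * (∑ a, ∑ a', f (a, a') • (u y a * u y' a')) * u y' x'
        = f (x, x') • (u y x * u y' x') := by
      calc u y x * (∑ a, ∑ a', f (a, a') • (u y a * u y' a')) * u y' x'
          = ∑ a, ∑ a', u y x * (f (a, a') • (u y a * u y' a')) * u y' x' := by
            simp [Finset.mul_sum, Finset.sum_mul]
        _ = ∑ a, ∑ a', (if a = x ∧ a' = x' then f (x, x') • (u y x * u y' x') else 0) :=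
            Finset.sum_congr rfl fun a _ => Finset.sum_congr rfl fun a' _ => hL a a'
        _ = f (x, x') • (u y x * u y' x') := by
            simp [ite_and, Finset.sum_ite_eq']
    rw [key] at hsum
    rw [mul_smul_comm, smul_mul_assoc, mul_one] at hsum
    have hsub : (f (x, x') - f (y, y')) • (u y x * u y' x') = 0 := by
      rw [sub_smul, hsum, sub_self]
    rcases smul_eq_zero.mp hsub with h | h
    · exact sub_eq_zero.mp h
    · exact absurd h hne
  · intro hconst y y'
    have hc : ∀ a a', f (a, a') • (u y a * u y' a') = f (y, y') • (u y a * u y' a') := by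
      intro a a'
      rcases eq_or_ne (u y a * u y' a') 0 with h | h
      · rw [h, smul_zero, smul_zero]
      · rw [hconst a a' y y' h]
    calc ∑ a, ∑ a', f (a, a') • (u y a * u y' a')
        = ∑ a, ∑ a', f (y, y') • (u y a * u y' a') :=
          Finset.sum_congr rfl fun a _ => Finset.sum_congr rfl fun a' _ => hc a a'
      _ = f (y, y') • ∑ a, ∑ a', u y a * u y' a' := by
          simp [Finset.smul_sum]
      _ = f (y, y') • ((∑ a, u y a) * (∑ a', u y' a')) := by
          rw [Finset.sum_mul_sum]
      _ = f (y, y') • (1 : A) := by rw [hrow, hrow, one_mul]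
end

section
/- Let A be a unital C*-algebra, X a finite set, and U = (u_{xy})_{x,y∈X} a magic unitary over A. Define the relation ∼₂ on X × X by (x,x') ∼₂ (y,y') if and only if u_{xy}·u_{x'y'} ≠ 0, and assume ∼₂ is an equivalence relation. Let R_i, R_j, R_k be (not necessarily distinct) equivalence classes of ∼₂. Then for any (x,z), (x',z') ∈ R_k, the sets {y ∈ X : (x,y) ∈ R_i and (y,z) ∈ R_j} and {y' ∈ X : (x',y') ∈ R_i and (y',z') ∈ R_j} have the same cardinality. In other words, the equivalence classes of ∼₂ have well-defined intersection numbers, so they form a coherent configuration on X. -/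
/-- Assume the orbital relation `∼₂` of a magic unitary is an equivalence
relation, and let `R i = {q | (x,x') ∼₂ q}` etc. be equivalence classes (given by
representatives `pi`, `pj`, `pk`). Then the intersection numbers are well defined: for any
two pairs `(x,z)`, `(x',z')` in the class of `pk`, the number of `y` with `(x,y)` in the
class of `pi` and `(y,z)` in the class of `pj` equals the corresponding number for
`(x',z')`. Hence the orbitals form a coherent configuration. -/
theorem orbitals_form_coherent_configuration {A : Type*} [CStarAlgebra A] {X : Type*}
    [Fintype X] [DecidableEq X] (u : X → X → A)
    (hstar : ∀ x y, star (u x y) = u x y)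
    (hidem : ∀ x y, u x y * u x y = u x y)
    (hrow : ∀ x, ∑ y, u x y = 1)
    (hcol : ∀ x, ∑ y, u y x = 1)
    (hEquiv : Equivalence (fun p q : X × X => u p.1 q.1 * u p.2 q.2 ≠ 0))
    (pi pj pk : X × X) (x z x' z' : X)
    (hxz : u pk.1 x * u pk.2 z ≠ 0)
    (hxz' : u pk.1 x' * u pk.2 z' ≠ 0) :
    {y : X | u pi.1 x * u pi.2 y ≠ 0 ∧ u pj.1 y * u pj.2 z ≠ 0}.ncard =
      {y' : X | u pi.1 x' * u pi.2 y' ≠ 0 ∧ u pj.1 y' * u pj.2 z' ≠ 0}.ncard := by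
  classical
  -- relation notation
  set r : X × X → X × X → Prop := fun p q => u p.1 q.1 * u p.2 q.2 ≠ 0 with hr
  have hsymm : ∀ {p q}, r p q → r q p := fun h => hEquiv.symm h
  have htrans : ∀ {p q s}, r p q → r q s → r p s := fun h h' => hEquiv.trans h h'
  have hkx : r pk (x, z) := hxz
  have hkx' : r pk (x', z') := hxz'
  have hq : u x x' * u z z' ≠ 0 := htrans (hsymm hkx) hkx'
  -- the two counting sets as finsets
  set S : Finset X :=
    Finset.univ.filter (fun y => u pi.1 x * u pi.2 y ≠ 0 ∧ u pj.1 y * u pj.2 z ≠ 0) with hS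
  set S' : Finset X :=
    Finset.univ.filter (fun y => u pi.1 x' * u pi.2 y ≠ 0 ∧ u pj.1 y * u pj.2 z' ≠ 0) with hS'
  have hcard1 : {y : X | u pi.1 x * u pi.2 y ≠ 0 ∧ u pj.1 y * u pj.2 z ≠ 0}.ncard = S.card := by
    rw [← Set.ncard_coe_finset]
    congr 1
    ext y
    simp [hS]
  have hcard2 :
      {y' : X | u pi.1 x' * u pi.2 y' ≠ 0 ∧ u pj.1 y' * u pj.2 z' ≠ 0}.ncard = S'.card := by
    rw [← Set.ncard_coe_finset]
    congr 1
    ext y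
    simp [hS']
  rw [hcard1, hcard2]
  -- the key term
  set t : X → X → A := fun y y' => u x x' * u y y' * u z z' with ht
  -- cross membership claims
  have claimA : ∀ y ∈ S, ∀ y', t y y' ≠ 0 → y' ∈ S' := by
    intro y hy y' hty
    have hymem := Finset.mem_filter.mp hy
    have hi : r pi (x, y) := hymem.2.1
    have hj : r pj (y, z) := hymem.2.2
    have hab : u x x' * u y y' ≠ 0 := by
      intro h0
      apply hty
      rw [ht]
      simp only []
      rw [h0, zero_mul]
    have hbc : u y y' * u z z' ≠ 0 := by
      intro h0
      apply hty
      rw [ht]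
      simp only []
      rw [mul_assoc, h0, mul_zero]
    have hi' : r pi (x', y') := htrans hi hab
    have hj' : r pj (y', z') := htrans hj hbc
    exact Finset.mem_filter.mpr ⟨Finset.mem_univ _, hi', hj'⟩
  have claimB : ∀ y' ∈ S', ∀ y, t y y' ≠ 0 → y ∈ S := by
    intro y' hy' y hty
    have hymem := Finset.mem_filter.mp hy'
    have hi : r pi (x', y') := hymem.2.1
    have hj : r pj (y', z') := hymem.2.2
    have hab : u x x' * u y y' ≠ 0 := by
      intro h0
      apply hty
      rw [ht]
      simp only []
      rw [h0, zero_mul]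
    have hbc : u y y' * u z z' ≠ 0 := by
      intro h0
      apply hty
      rw [ht]
      simp only []
      rw [mul_assoc, h0, mul_zero]
    have hi' : r pi (x, y) := htrans hi (hsymm hab)
    have hj' : r pj (y, z) := htrans hj (hsymm hbc)
    exact Finset.mem_filter.mpr ⟨Finset.mem_univ _, hi', hj'⟩
  -- sum computations
  have sumrow : ∀ y : X, ∑ y', t y y' = u x x' * u z z' := by
    intro y
    calc ∑ y', t y y' = (u x x' * ∑ y', u y y') * u z z' := by
          rw [Finset.mul_sum, Finset.sum_mul]
      _ = u x x' * u z z' := by rw [hrow y, mul_one]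
  have sumcol : ∀ y' : X, ∑ y, t y y' = u x x' * u z z' := by
    intro y'
    calc ∑ y, t y y' = (u x x' * ∑ y, u y y') * u z z' := by
          rw [Finset.mul_sum, Finset.sum_mul]
      _ = u x x' * u z z' := by rw [hcol y', mul_one]
  have eq1 : ∑ y ∈ S, ∑ y' ∈ S', t y y' = S.card • (u x x' * u z z') := by
    have : ∀ y ∈ S, ∑ y' ∈ S', t y y' = u x x' * u z z' := by
      intro y hy
      rw [← sumrow y]
      apply Finset.sum_subset (Finset.subset_univ S')
      intro y' _ hy'
      by_contra h0
      exact hy' (claimA y hy y' h0)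
    rw [Finset.sum_congr rfl this, Finset.sum_const]
  have eq2 : ∑ y ∈ S, ∑ y' ∈ S', t y y' = S'.card • (u x x' * u z z') := by
    rw [Finset.sum_comm]
    have : ∀ y' ∈ S', ∑ y ∈ S, t y y' = u x x' * u z z' := by
      intro y' hy'
      rw [← sumcol y']
      apply Finset.sum_subset (Finset.subset_univ S)
      intro y _ hy
      by_contra h0
      exact hy (claimB y' hy' y h0)
    rw [Finset.sum_congr rfl this, Finset.sum_const]
  have hsmul : (S.card : ℂ) • (u x x' * u z z') = (S'.card : ℂ) • (u x x' * u z z') := by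
    rw [Nat.cast_smul_eq_nsmul, Nat.cast_smul_eq_nsmul, ← eq1, ← eq2]
  have : (S.card : ℂ) = (S'.card : ℂ) := by
    by_contra hne
    have hsub : ((S.card : ℂ) - (S'.card : ℂ)) • (u x x' * u z z') = 0 := by
      rw [sub_smul, hsmul, sub_self]
    rcases smul_eq_zero.mp hsub with h | h
    · exact hne (sub_eq_zero.mp h)
    · exact hq h
  exact_mod_cast this
end

section
/- Let A be a unital C*-algebra, X a finite set, U = (u_{xy})_{x,y∈X} a magic unitary over A, and M a complex X × X matrix. Then MU = UM (as matrices over A, with M acting through the ℂ-algebra structure of A) if and only if for all x, v, w, z ∈ X with u_{xw}·u_{vz} ≠ 0 one has M_{xv} = M_{wz}. -/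
/-- Projections summing to 1 in a C*-algebra are pairwise orthogonal. -/
lemma proj_sum_one_orth {A : Type*} [CStarAlgebra A] {X : Type*} [Fintype X]
    [DecidableEq X] (v : X → A) (hstar : ∀ y, star (v y) = v y)
    (hidem : ∀ y, v y * v y = v y) (hsum : ∑ y, v y = 1) :
    ∀ {i j}, i ≠ j → v i * v j = 0 := by
  letI := CStarAlgebra.spectralOrder A
  haveI := CStarAlgebra.spectralOrderedRing (A := A)
  intro i j hij
  have key : ∑ y ∈ Finset.univ.erase i, v i * v y * v i = 0 := by
    have h1 : v i * (∑ y, v y) * v i = v i := by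
      rw [hsum, mul_one, hidem]
    rw [Finset.mul_sum, Finset.sum_mul] at h1
    have h2 : ∑ y, v i * v y * v i
        = v i * v i * v i + ∑ y ∈ Finset.univ.erase i, v i * v y * v i := by
      rw [← Finset.sum_erase_add _ _ (Finset.mem_univ i)]
      exact add_comm _ _
    have h3 : v i * v i * v i = v i := by rw [hidem, hidem]
    rw [h2, h3] at h1
    linear_combination (norm := abel) h1
  have hterm : ∀ y ∈ Finset.univ.erase i, v i * v y * v i = 0 := by
    refine (Finset.sum_eq_zero_iff_of_nonneg (s := Finset.univ.erase i)
      (f := fun y => v i * v y * v i) ?_).mp key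
    intro y _
    have heq : v i * v y * v i = star (v y * v i) * (v y * v i) := by
      rw [star_mul, hstar, hstar, mul_assoc]
      conv_rhs => rw [mul_assoc, ← mul_assoc (v y) (v y), hidem]
    show 0 ≤ v i * v y * v i
    rw [heq]
    exact star_mul_self_nonneg _
  have hj : v j * v i = 0 := by
    have := hterm j (Finset.mem_erase.mpr ⟨fun h => hij h.symm, Finset.mem_univ j⟩)
    have heq : star (v j * v i) * (v j * v i) = 0 := by
      rw [star_mul, hstar, hstar, mul_assoc]
      conv_lhs => rw [← mul_assoc (v j) (v j), hidem]
      rw [← mul_assoc]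
      exact this
    exact (CStarRing.star_mul_self_eq_zero_iff _).mp heq
  calc v i * v j = star (v j * v i) := by rw [star_mul, hstar, hstar]
    _ = 0 := by rw [hj, star_zero]

/-- A complex matrix `M` commutes with a magic unitary `U`
(`(MU)_{xz} = ∑ y, M x y • u y z`, `(UM)_{xz} = ∑ y, M y z • u x y`) if and only if `M`
is constant on the orbitals: `M x v = M w z` whenever `u x w * u v z ≠ 0`. -/
theorem commutes_iff_constant_on_orbitals {A : Type*} [CStarAlgebra A] {X : Type*}
    [Fintype X] [DecidableEq X] (u : X → X → A)
    (hstar : ∀ x y, star (u x y) = u x y)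
    (hidem : ∀ x y, u x y * u x y = u x y)
    (hrow : ∀ x, ∑ y, u x y = 1)
    (hcol : ∀ x, ∑ y, u y x = 1)
    (M : Matrix X X ℂ) :
    (∀ x z, ∑ y, M x y • u y z = ∑ y, M y z • u x y) ↔
      (∀ x v w z, u x w * u v z ≠ 0 → M x v = M w z) := by
  have rowOrth : ∀ x {i j}, i ≠ j → u x i * u x j = 0 := fun x =>
    proj_sum_one_orth (u x) (hstar x) (hidem x) (hrow x)
  have colOrth : ∀ z {i j}, i ≠ j → u i z * u j z = 0 := fun z =>
    proj_sum_one_orth (fun y => u y z) (fun y => hstar y z) (fun y => hidem y z)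
      (hcol z)
  constructor
  · intro h x v w z hne
    have h1 : u x w * ((∑ y, M x y • u y z) * u v z)
        = M x v • (u x w * u v z) := by
      rw [Finset.sum_mul]
      rw [Finset.sum_eq_single v]
      · rw [smul_mul_assoc, hidem, mul_smul_comm]
      · intro y _ hy
        rw [smul_mul_assoc, colOrth z hy, smul_zero]
      · intro hv; exact absurd (Finset.mem_univ v) hv
    have h2 : u x w * ((∑ y, M y z • u x y) * u v z)
        = M w z • (u x w * u v z) := by
      rw [Finset.sum_mul, Finset.mul_sum]
      rw [Finset.sum_eq_single w]
      · rw [smul_mul_assoc, mul_smul_comm, ← mul_assoc, hidem]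
      · intro y _ hy
        rw [smul_mul_assoc, mul_smul_comm, ← mul_assoc, rowOrth x (Ne.symm hy),
          zero_mul, smul_zero]
      · intro hw; exact absurd (Finset.mem_univ w) hw
    have heq : M x v • (u x w * u v z) = M w z • (u x w * u v z) := by
      rw [← h1, ← h2, h x z]
    have : (M x v - M w z) • (u x w * u v z) = 0 := by
      rw [sub_smul, heq, sub_self]
    rcases smul_eq_zero.mp this with hc | hz
    · exact sub_eq_zero.mp hc
    · exact absurd hz hne
  · intro h x z
    calc ∑ y, M x y • u y z
        = ∑ y, M x y • ((∑ w, u x w) * u y z) := by simp [hrow x]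
      _ = ∑ y, ∑ w, M x y • (u x w * u y z) := by
          simp [Finset.sum_mul, Finset.smul_sum]
      _ = ∑ y, ∑ w, M w z • (u x w * u y z) := by
          apply Finset.sum_congr rfl; intro y _
          apply Finset.sum_congr rfl; intro w _
          by_cases hz : u x w * u y z = 0
          · rw [hz, smul_zero, smul_zero]
          · rw [h x y w z hz]
      _ = ∑ w, M w z • (u x w * ∑ y, u y z) := by
          rw [Finset.sum_comm]
          apply Finset.sum_congr rfl; intro w _
          rw [Finset.mul_sum, Finset.smul_sum]
      _ = ∑ y, M y z • u x y := by
          apply Finset.sum_congr rfl; intro w _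
          rw [hcol z, mul_one]
end

section
/- Let A be a unital C*-algebra, X a finite set, and U = (u_{xy})_{x,y∈X} a magic unitary over A. Then the commutant C = {M : complex X × X matrix with MU = UM} is a coherent algebra: it is a linear subspace of the complex X × X matrices that contains the identity matrix I and the all-ones matrix J, and is closed under matrix multiplication, under conjugate transposition, and under Schur (entrywise) product. -/
open Finset

section MagicAux

variable {A : Type*} [CStarAlgebra A] {X : Type*} [Fintype X] [DecidableEq X]

/-- Projections summing to `1` in a C*-algebra are pairwise orthogonal. -/
lemma magic_proj_orth (p : X → A)
    (hstar : ∀ x, star (p x) = p x) (hidem : ∀ x, p x * p x = p x)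
    (hsum : ∑ x, p x = 1) {i j : X} (hij : j ≠ i) : p j * p i = 0 := by
  letI := CStarAlgebra.spectralOrder A
  haveI := CStarAlgebra.spectralOrderedRing A
  have hterm : ∀ k, star (p k * p i) * (p k * p i) = p i * p k * p i := by
    intro k
    rw [star_mul, hstar, hstar, ← mul_assoc, mul_assoc (p i), hidem]
  have hsum0 : ∑ k ∈ univ.erase i, star (p k * p i) * (p k * p i) = 0 := by
    simp_rw [hterm]
    have h2 : ∑ k ∈ univ.erase i, p i * p k * p i
        = p i * (∑ k ∈ univ.erase i, p k) * p i := by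
      rw [Finset.mul_sum, Finset.sum_mul]
    have herase : ∑ k ∈ univ.erase i, p k = 1 - p i :=
      eq_sub_of_add_eq' (by rw [Finset.add_sum_erase univ p (Finset.mem_univ i), hsum])
    rw [h2, herase, mul_sub, mul_one, hidem, sub_mul, hidem, sub_self]
  have key := (Finset.sum_eq_zero_iff_of_nonneg
    (fun k _ => star_mul_self_nonneg (p k * p i))).mp hsum0
  have h0 := key j (Finset.mem_erase.mpr ⟨hij, Finset.mem_univ j⟩)
  exact CStarRing.star_mul_self_eq_zero_iff _ |>.mp h0

variable (u : X → X → A)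
    (hstar : ∀ x y, star (u x y) = u x y)
    (hidem : ∀ x y, u x y * u x y = u x y)
    (hrow : ∀ x, ∑ y, u x y = 1)
    (hcol : ∀ x, ∑ y, u y x = 1)

include hstar hidem hrow in
lemma magic_row_orth_s8 {x b c : X} (h : b ≠ c) : u x b * u x c = 0 :=
  magic_proj_orth (u x) (fun y => hstar x y) (fun y => hidem x y) (hrow x) h

include hstar hidem hcol in
lemma magic_col_orth {x b c : X} (h : b ≠ c) : u b x * u c x = 0 :=
  magic_proj_orth (fun w => u w x) (fun y => hstar y x) (fun y => hidem y x) (hcol x) h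

include hstar hidem hrow hcol in
/-- If `M` commutes with the magic unitary `U`, then
`M x y • (u x w * u y z) = M w z • (u x w * u y z)` for all indices. -/
lemma magic_key_fwd (M : Matrix X X ℂ)
    (hM : ∀ x z, ∑ y, M x y • u y z = ∑ y, M y z • u x y) :
    ∀ x w y z, M x y • (u x w * u y z) = M w z • (u x w * u y z) := by
  have rowA : ∀ x w z, u x w * (∑ b, M x b • u b z) = M w z • u x w := by
    intro x w z
    rw [hM x z, Finset.mul_sum]
    rw [Finset.sum_eq_single w]
    · rw [mul_smul_comm, hidem]
    · intro b _ hb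
      rw [mul_smul_comm, magic_row_orth_s8 u hstar hidem hrow (Ne.symm hb), smul_zero]
    · intro h; exact absurd (Finset.mem_univ w) h
  intro x w y z
  have h1 := congrArg (· * u y z) (rowA x w z)
  simp only [Finset.mul_sum, Finset.sum_mul, smul_mul_assoc, mul_smul_comm,
    mul_assoc] at h1
  rw [Finset.sum_eq_single y] at h1
  · rw [hidem] at h1
    exact h1
  · intro b _ hb
    rw [magic_col_orth u hstar hidem hcol hb, mul_zero, smul_zero]
  · intro h; exact absurd (Finset.mem_univ y) h

omit [DecidableEq X] in
include hrow hcol in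
/-- Converse of `magic_key_fwd`. -/
lemma magic_key_bwd (M : Matrix X X ℂ)
    (hK : ∀ x w y z, M x y • (u x w * u y z) = M w z • (u x w * u y z)) :
    ∀ x z, ∑ y, M x y • u y z = ∑ y, M y z • u x y := by
  intro x z
  calc ∑ y, M x y • u y z
      = ∑ y, M x y • ((∑ w, u x w) * u y z) := by simp_rw [hrow x, one_mul]
    _ = ∑ y, ∑ w, M x y • (u x w * u y z) := by
        simp_rw [Finset.sum_mul, Finset.smul_sum]
    _ = ∑ y, ∑ w, M w z • (u x w * u y z) :=
        Finset.sum_congr rfl fun y _ => Finset.sum_congr rfl fun w _ => hK x w y z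
    _ = ∑ w, M w z • (u x w * (∑ y, u y z)) := by
        rw [Finset.sum_comm]
        simp_rw [Finset.mul_sum, Finset.smul_sum]
    _ = ∑ y, M y z • u x y := by simp_rw [hcol z, mul_one]

end MagicAux

/-- The commutant of a magic unitary, i.e. the set of complex matrices `M`
with `MU = UM` (entrywise, `∑ y, M x y • u y z = ∑ y, M y z • u x y`), is a coherent
algebra: it is a linear subspace containing the identity and all-ones matrices, closed
under matrix multiplication, conjugate transposition, and Schur (entrywise) product. -/
theorem commutant_is_coherent_algebra {A : Type*} [CStarAlgebra A] {X : Type*}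
    [Fintype X] [DecidableEq X] (u : X → X → A)
    (hstar : ∀ x y, star (u x y) = u x y)
    (hidem : ∀ x y, u x y * u x y = u x y)
    (hrow : ∀ x, ∑ y, u x y = 1)
    (hcol : ∀ x, ∑ y, u y x = 1) :
    ∃ C : Submodule ℂ (Matrix X X ℂ),
      (∀ M : Matrix X X ℂ,
          M ∈ C ↔ ∀ x z, ∑ y, M x y • u y z = ∑ y, M y z • u x y) ∧
      (1 : Matrix X X ℂ) ∈ C ∧
      (Matrix.of fun _ _ => (1 : ℂ)) ∈ C ∧
      (∀ M N, M ∈ C → N ∈ C → M * N ∈ C) ∧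
      (∀ M, M ∈ C → M.conjTranspose ∈ C) ∧
      (∀ M N, M ∈ C → N ∈ C → (Matrix.of fun x y => M x y * N x y) ∈ C) := by
  refine ⟨{ carrier := {M | ∀ x z, ∑ y, M x y • u y z = ∑ y, M y z • u x y}
            add_mem' := ?_
            zero_mem' := by simp
            smul_mem' := ?_ }, fun M => Iff.rfl, ?_, ?_, ?_, ?_, ?_⟩
  · -- closed under addition
    intro M N hM hN x z
    simp only [Matrix.add_apply, add_smul, Finset.sum_add_distrib]
    rw [hM x z, hN x z]
  · -- closed under scalar multiplication
    intro c M hM x z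
    simp only [Matrix.smul_apply, smul_eq_mul, mul_smul, ← Finset.smul_sum]
    rw [hM x z]
  · -- identity matrix
    intro x z
    simp [Matrix.one_apply, ite_smul]
  · -- all-ones matrix
    intro x z
    simp only [Matrix.of_apply, one_smul, hcol, hrow]
  · -- matrix multiplication
    intro M N hM hN x z
    calc ∑ y, (M * N) x y • u y z
        = ∑ y, ∑ b, (M x b * N b y) • u y z := by
          simp_rw [Matrix.mul_apply, Finset.sum_smul]
      _ = ∑ b, M x b • ∑ y, N b y • u y z := by
          rw [Finset.sum_comm]
          simp_rw [mul_smul, Finset.smul_sum]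
      _ = ∑ b, M x b • ∑ y, N y z • u b y :=
          Finset.sum_congr rfl fun b _ => by rw [hN b z]
      _ = ∑ y, N y z • ∑ b, M x b • u b y := by
          simp_rw [Finset.smul_sum]
          rw [Finset.sum_comm]
          exact Finset.sum_congr rfl fun y _ => Finset.sum_congr rfl fun b _ =>
            smul_comm _ _ _
      _ = ∑ y, N y z • ∑ b, M b y • u x b :=
          Finset.sum_congr rfl fun y _ => by rw [hM x y]
      _ = ∑ b, ∑ y, (M b y * N y z) • u x b := by
          simp_rw [Finset.smul_sum, mul_smul]
          rw [Finset.sum_comm]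
          exact Finset.sum_congr rfl fun y _ => Finset.sum_congr rfl fun b _ =>
            smul_comm _ _ _
      _ = ∑ y, (M * N) y z • u x y := by
          simp_rw [Matrix.mul_apply, Finset.sum_smul]
  · -- conjugate transpose
    intro M hM
    apply magic_key_bwd u hrow hcol
    intro x w y z
    have h := congrArg star (magic_key_fwd u hstar hidem hrow hcol M hM y z x w)
    simp only [star_smul, star_mul, hstar, Matrix.conjTranspose_apply] at h ⊢
    exact h
  · -- Schur product
    intro M N hM hN
    apply magic_key_bwd u hrow hcol
    intro x w y z
    have hMk := magic_key_fwd u hstar hidem hrow hcol M hM x w y z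
    have hNk := magic_key_fwd u hstar hidem hrow hcol N hN x w y z
    simp only [Matrix.of_apply, mul_smul]
    rw [hNk, smul_comm, hMk, smul_comm]
end

section
/- Let A be a unital C*-algebra, X a finite set, and U = (u_{xy})_{x,y∈X} a magic unitary over A. Suppose there is a unital ℂ-algebra homomorphism Δ : A → A ⊗_ℂ A with Δ(u_{xz}) = ∑_{w∈X} u_{xw} ⊗ u_{wz} for all x, z ∈ X, and a ℂ-linear functional h : A → ℂ with h(1) = 1 satisfying the invariance condition (h ⊗ id)(Δ(a)) = h(a)·1 for all a ∈ A, where h ⊗ id : A ⊗_ℂ A → A is the linear map determined by a ⊗ b ↦ h(a)·b. Define (x,x') ∼₂ (y,y') if and only if u_{xy}·u_{x'y'} ≠ 0, and assume ∼₂ is an equivalence relation on X × X. Then: if (x,x') and (y,y') lie in a common equivalence class R of ∼₂, then h(u_{xy}·u_{x'y'}) = 1/|R|; and if (x,x') and (y,y') are not ∼₂-equivalent, then h(u_{xy}·u_{x'y'}) = 0. -/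
open scoped TensorProduct

/-- Projections summing to one are mutually orthogonal. -/
lemma proj_ortho {A : Type*} [CStarAlgebra A] {ι : Type*} [Fintype ι] [DecidableEq ι]
    (p : ι → A) (hstar : ∀ i, star (p i) = p i)
    (hidem : ∀ i, p i * p i = p i) (hsum : ∑ i, p i = 1) :
    ∀ i j, i ≠ j → p i * p j = 0 := by
  intro i j hij
  let _ := CStarAlgebra.spectralOrder A
  have _ := CStarAlgebra.spectralOrderedRing A
  have hterm : ∀ k, p j * (p k * p j) = star (p k * p j) * (p k * p j) := by
    intro k
    rw [star_mul, hstar, hstar]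
    calc p j * (p k * p j) = p j * ((p k * p k) * p j) := by rw [hidem]
      _ = p j * p k * (p k * p j) := by noncomm_ring
  have hsum2 : ∑ k, p j * (p k * p j) = p j := by
    have : ∑ k, p j * (p k * p j) = p j * ((∑ k, p k) * p j) := by
      rw [Finset.sum_mul, Finset.mul_sum]
    rw [this, hsum, one_mul, hidem]
  have h0 : ∑ k ∈ Finset.univ.erase j, p j * (p k * p j) = 0 := by
    have h1 := Finset.add_sum_erase Finset.univ (fun k => p j * (p k * p j)) (Finset.mem_univ j)
    simp only [hsum2] at h1
    have : p j * (p j * p j) = p j := by rw [hidem, hidem]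
    rw [this] at h1
    exact add_eq_left.mp h1
  have hnn : ∀ k ∈ Finset.univ.erase j, 0 ≤ p j * (p k * p j) := by
    intro k _
    rw [hterm k]
    exact star_mul_self_nonneg _
  have hmem : i ∈ Finset.univ.erase j := Finset.mem_erase.mpr ⟨hij, Finset.mem_univ i⟩
  have := (Finset.sum_eq_zero_iff_of_nonneg hnn).mp h0 i hmem
  rw [hterm i] at this
  rwa [CStarRing.star_mul_self_eq_zero_iff] at this

/-- Let `u` be a magic unitary over a unital C*-algebra, `Δ` a
comultiplication, and `h` an invariant state (Haar state): `(h ⊗ id)(Δ a) = h a • 1`.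
If the orbital relation `∼₂` is an equivalence relation, then
`h (u x y * u x' y') = 1 / |R|` when `(x,x')` and `(y,y')` lie in a common class `R`,
and `h (u x y * u x' y') = 0` otherwise. -/
theorem haar_state_on_pairs {A : Type*} [CStarAlgebra A] {X : Type*}
    [Fintype X] [DecidableEq X] (u : X → X → A)
    (hstar : ∀ x y, star (u x y) = u x y)
    (hidem : ∀ x y, u x y * u x y = u x y)
    (hrow : ∀ x, ∑ y, u x y = 1)
    (hcol : ∀ x, ∑ y, u y x = 1)
    (Δ : A →ₐ[ℂ] A ⊗[ℂ] A)
    (hΔ : ∀ x z, Δ (u x z) = ∑ w, u x w ⊗ₜ[ℂ] u w z)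
    (h : A →ₗ[ℂ] ℂ) (hone : h 1 = 1)
    (hinv : ∀ a : A,
      (TensorProduct.lid ℂ A) ((LinearMap.rTensor A h) (Δ a)) = h a • (1 : A))
    (hEquiv : Equivalence (fun p q : X × X => u p.1 q.1 * u p.2 q.2 ≠ 0)) :
    ∀ x x' y y' : X,
      (u x y * u x' y' ≠ 0 →
        h (u x y * u x' y') =
          1 / ({q : X × X | u x q.1 * u x' q.2 ≠ 0}.ncard : ℂ)) ∧
      (u x y * u x' y' = 0 → h (u x y * u x' y') = 0) := by
  classical
  -- column orthogonality
  have colO : ∀ z a w, a ≠ w → u a z * u w z = 0 := fun z =>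
    proj_ortho (fun a => u a z) (fun a => hstar a z) (fun a => hidem a z) (hcol z)
  intro x x' y y'
  refine ⟨?_, fun h0 => by rw [h0, map_zero]⟩
  intro hne
  -- the key invariance equation
  have keyEq : ∀ z z' : X,
      ∑ w, ∑ v, h (u x w * u x' v) • (u w z * u v z') = h (u x z * u x' z') • (1 : A) := by
    intro z z'
    have hΔa : Δ (u x z * u x' z') =
        ∑ w, ∑ v, (u x w * u x' v) ⊗ₜ[ℂ] (u w z * u v z') := by
      rw [map_mul, hΔ, hΔ, Finset.sum_mul_sum]
      exact Finset.sum_congr rfl fun w _ => Finset.sum_congr rfl fun v _ =>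
        Algebra.TensorProduct.tmul_mul_tmul _ _ _ _
    have h1 := hinv (u x z * u x' z')
    rw [hΔa] at h1
    simpa only [map_sum, LinearMap.rTensor_tmul, TensorProduct.lid_tmul,
      LinearEquiv.coe_coe, LinearMap.coe_coe] using h1
  -- constancy of `h` on the orbital
  have key2 : ∀ a b z z' : X, u a z * u b z' ≠ 0 →
      h (u x a * u x' b) = h (u x z * u x' z') := by
    intro a b z z' hab
    have hsum_collapse :
        ∑ w, ∑ v, h (u x w * u x' v) • (u a z * (u w z * u v z') * u b z') =
          h (u x a * u x' b) • (u a z * u b z') := by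
      calc ∑ w, ∑ v, h (u x w * u x' v) • (u a z * (u w z * u v z') * u b z')
          = ∑ v, h (u x a * u x' v) • (u a z * (u a z * u v z') * u b z') := by
            refine Finset.sum_eq_single a ?_ (fun ha => absurd (Finset.mem_univ a) ha)
            intro w _ hwa
            refine Finset.sum_eq_zero fun v _ => ?_
            have hz : u a z * u w z = 0 := colO z a w (Ne.symm hwa)
            have : u a z * (u w z * u v z') * u b z' = 0 := by
              calc u a z * (u w z * u v z') * u b z'
                  = (u a z * u w z) * (u v z' * u b z') := by noncomm_ring
                _ = 0 := by rw [hz, zero_mul]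
            rw [this, smul_zero]
        _ = h (u x a * u x' b) • (u a z * (u a z * u b z') * u b z') := by
            refine Finset.sum_eq_single b ?_ (fun hb => absurd (Finset.mem_univ b) hb)
            intro v _ hvb
            have hz : u v z' * u b z' = 0 := colO z' v b hvb
            have : u a z * (u a z * u v z') * u b z' = 0 := by
              calc u a z * (u a z * u v z') * u b z'
                  = (u a z * u a z) * (u v z' * u b z') := by noncomm_ring
                _ = 0 := by rw [hz, mul_zero]
            rw [this, smul_zero]
        _ = h (u x a * u x' b) • (u a z * u b z') := by
            have : u a z * (u a z * u b z') * u b z' = u a z * u b z' := by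
              calc u a z * (u a z * u b z') * u b z'
                  = (u a z * u a z) * (u b z' * u b z') := by noncomm_ring
                _ = u a z * u b z' := by rw [hidem, hidem]
            rw [this]
    have e2 : h (u x a * u x' b) • (u a z * u b z') =
        h (u x z * u x' z') • (u a z * u b z') := by
      calc h (u x a * u x' b) • (u a z * u b z')
          = ∑ w, ∑ v, h (u x w * u x' v) • (u a z * (u w z * u v z') * u b z') :=
            hsum_collapse.symm
        _ = u a z * (∑ w, ∑ v, h (u x w * u x' v) • (u w z * u v z')) * u b z' := by
            simp only [Finset.mul_sum, Finset.sum_mul, mul_smul_comm, smul_mul_assoc]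
        _ = u a z * (h (u x z * u x' z') • (1 : A)) * u b z' := by rw [keyEq]
        _ = h (u x z * u x' z') • (u a z * u b z') := by
            simp only [mul_smul_comm, smul_mul_assoc, mul_one]
    have e3 : (h (u x a * u x' b) - h (u x z * u x' z')) • (u a z * u b z') = 0 := by
      rw [sub_smul, e2, sub_self]
    rcases smul_eq_zero.mp e3 with hc | hc
    · exact sub_eq_zero.mp hc
    · exact absurd hc hab
  -- the class as a finset
  have hRS : {q : X × X | u x q.1 * u x' q.2 ≠ 0} =
      ↑(Finset.univ.filter (fun q : X × X => u x q.1 * u x' q.2 ≠ 0)) := by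
    ext q; simp
  rw [hRS, Set.ncard_coe_finset]
  have hconst : ∀ q ∈ Finset.univ.filter (fun q : X × X => u x q.1 * u x' q.2 ≠ 0),
      h (u x q.1 * u x' q.2) = h (u x y * u x' y') := by
    intro q hq
    have hq' : u x q.1 * u x' q.2 ≠ 0 := (Finset.mem_filter.mp hq).2
    have h1 : (fun p q : X × X => u p.1 q.1 * u p.2 q.2 ≠ 0) (x, x') q := hq'
    have h2 : (fun p q : X × X => u p.1 q.1 * u p.2 q.2 ≠ 0) (x, x') (y, y') := hne
    have h3 := hEquiv.trans (hEquiv.symm h1) h2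
    exact key2 q.1 q.2 y y' h3
  have hsum1 : ∑ q : X × X, h (u x q.1 * u x' q.2) = 1 := by
    rw [← map_sum]
    have : ∑ q : X × X, u x q.1 * u x' q.2 = 1 := by
      rw [Fintype.sum_prod_type, ← Finset.sum_mul_sum, hrow, hrow, one_mul]
    rw [this, hone]
  have hsplit := Finset.sum_filter_add_sum_filter_not (Finset.univ : Finset (X × X))
    (fun q => u x q.1 * u x' q.2 ≠ 0) (fun q => h (u x q.1 * u x' q.2))
  have hz : ∑ q ∈ Finset.univ.filter (fun q : X × X => ¬ u x q.1 * u x' q.2 ≠ 0),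
      h (u x q.1 * u x' q.2) = 0 := by
    refine Finset.sum_eq_zero fun q hq => ?_
    have : u x q.1 * u x' q.2 = 0 := not_not.mp (Finset.mem_filter.mp hq).2
    rw [this, map_zero]
  have hsum2 : ∑ q : X × X, h (u x q.1 * u x' q.2) =
      ((Finset.univ.filter (fun q : X × X => u x q.1 * u x' q.2 ≠ 0)).card : ℂ) *
        h (u x y * u x' y') := by
    rw [← hsplit, hz, add_zero, Finset.sum_congr rfl hconst, Finset.sum_const,
      nsmul_eq_mul]
  have hmemS : (y, y') ∈ Finset.univ.filter (fun q : X × X => u x q.1 * u x' q.2 ≠ 0) := by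
    simp only [Finset.mem_filter, Finset.mem_univ, true_and]
    exact hne
  have hcard : (((Finset.univ.filter (fun q : X × X => u x q.1 * u x' q.2 ≠ 0)).card : ℂ)) ≠ 0 := by
    have : 0 < (Finset.univ.filter (fun q : X × X => u x q.1 * u x' q.2 ≠ 0)).card :=
      Finset.card_pos.mpr ⟨(y, y'), hmemS⟩
    exact_mod_cast Nat.cast_ne_zero.mpr this.ne'
  have hfin : (((Finset.univ.filter (fun q : X × X => u x q.1 * u x' q.2 ≠ 0)).card : ℂ)) *
      h (u x y * u x' y') = 1 := by rw [← hsum2, hsum1]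
  rw [eq_div_iff hcard, mul_comm]
  exact hfin
end

section
/- Let X and Y be finite simple graphs with complex adjacency matrices A_X and A_Y, let A be a unital C*-algebra, and let U = (u_{xy})_{x∈V(X), y∈V(Y)} be a magic unitary over A with A_X·U = U·A_Y. If u_{xy}·u_{x'y'} ≠ 0 for some x, x' ∈ V(X) and y, y' ∈ V(Y), then for every natural number ℓ the (x,x') entry of A_X^ℓ equals the (y,y') entry of A_Y^ℓ (i.e., X has the same number of walks of length ℓ from x to x' as Y has from y to y'); consequently x and x' are joined by a walk in X if and only if y and y' are joined by a walk in Y, and in that case the graph distance from x to x' in X equals the graph distance from y to y' in Y. -/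
/-- Projections (self-adjoint idempotents) in a C*-algebra summing to `1` are
pairwise orthogonal. -/
lemma magic_orth {A : Type*} [CStarAlgebra A] {ι : Type*} [Fintype ι] [DecidableEq ι]
    (p : ι → A) (hstar : ∀ i, star (p i) = p i) (hidem : ∀ i, p i * p i = p i)
    (hsum : ∑ i, p i = 1) {i j : ι} (hij : i ≠ j) : p i * p j = 0 := by
  letI := CStarAlgebra.spectralOrder A
  letI := CStarAlgebra.spectralOrderedRing A
  have hq : ∑ k ∈ Finset.univ.erase i, p k = 1 - p i := by
    rw [eq_sub_iff_add_eq, Finset.sum_erase_add _ _ (Finset.mem_univ i), hsum]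
  have hzero : ∑ k ∈ Finset.univ.erase i, p i * p k * p i = 0 := by
    rw [← Finset.sum_mul, ← Finset.mul_sum, hq]
    rw [mul_sub, mul_one, hidem, sub_self, zero_mul]
  have hterm : ∀ k ∈ Finset.univ.erase i, p i * p k * p i = 0 := by
    rw [← Finset.sum_eq_zero_iff_of_nonneg]
    · exact hzero
    · intro k _
      have : p i * p k * p i = star (p k * p i) * (p k * p i) := by
        rw [star_mul, hstar, hstar]
        calc p i * p k * p i = p i * (p k * p k) * p i := by rw [hidem]
          _ = p i * p k * (p k * p i) := by noncomm_ring
      rw [this]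
      exact star_mul_self_nonneg _
  have hk : p i * p j * p i = 0 := hterm j (Finset.mem_erase.mpr ⟨hij.symm, Finset.mem_univ j⟩)
  have : (p i * p j) * star (p i * p j) = 0 := by
    rw [star_mul, hstar, hstar]
    calc p i * p j * (p j * p i) = p i * (p j * p j) * p i := by noncomm_ring
    _ = p i * p j * p i := by rw [hidem]
    _ = 0 := hk
  exact (CStarRing.mul_star_self_eq_zero_iff _).mp this

/-- If `u` is a magic unitary intertwining the adjacency matrices of `X`
and `Y` (`A_X·U = U·A_Y`) and `u x y * u x' y' ≠ 0`, then for every `ℓ` the number of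
walks of length `ℓ` from `x` to `x'` in `X` equals that from `y` to `y'` in `Y`;
consequently `x, x'` are joined by a walk iff `y, y'` are, and in that case the graph
distances agree. -/
theorem walks_and_distance_preserved {A : Type*} [CStarAlgebra A]
    {V W : Type*} [Fintype V] [Fintype W] [DecidableEq V] [DecidableEq W]
    (X : SimpleGraph V) (Y : SimpleGraph W)
    [DecidableRel X.Adj] [DecidableRel Y.Adj]
    (u : V → W → A)
    (hstar : ∀ x y, star (u x y) = u x y)
    (hidem : ∀ x y, u x y * u x y = u x y)
    (hrow : ∀ x, ∑ y, u x y = 1)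
    (hcol : ∀ y, ∑ x, u x y = 1)
    (hAU : ∀ (x : V) (y' : W),
      ∑ x', X.adjMatrix ℂ x x' • u x' y' = ∑ y, Y.adjMatrix ℂ y y' • u x y)
    (x x' : V) (y y' : W) (hne : u x y * u x' y' ≠ 0) :
    (∀ ℓ : ℕ, (X.adjMatrix ℂ ^ ℓ) x x' = (Y.adjMatrix ℂ ^ ℓ) y y') ∧
      (X.Reachable x x' ↔ Y.Reachable y y') ∧
      (X.Reachable x x' → X.dist x x' = Y.dist y y') := by
  -- orthogonality within rows and columns
  have hroworth : ∀ (a : V) {b b' : W}, b ≠ b' → u a b * u a b' = 0 := fun a {b b'} h =>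
    magic_orth (fun w => u a w) (fun w => hstar a w) (fun w => hidem a w) (hrow a) h
  have hcolorth : ∀ (b : W) {a a' : V}, a ≠ a' → u a b * u a' b = 0 := fun b {a a'} h =>
    magic_orth (fun v => u v b) (fun v => hstar v b) (fun v => hidem v b) (hcol b) h
  -- intertwining of powers
  have hpow : ∀ (ℓ : ℕ) (a : V) (b' : W),
      ∑ a', (X.adjMatrix ℂ ^ ℓ) a a' • u a' b' = ∑ b, (Y.adjMatrix ℂ ^ ℓ) b b' • u a b := by
    intro ℓ
    induction ℓ with
    | zero =>
      intro a b'
      simp [Matrix.one_apply, ite_smul]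
    | succ n ih =>
      intro a b'
      calc ∑ a', (X.adjMatrix ℂ ^ (n + 1)) a a' • u a' b'
          = ∑ a', (∑ a₁, (X.adjMatrix ℂ ^ n) a a₁ * X.adjMatrix ℂ a₁ a') • u a' b' := by
            simp [pow_succ, Matrix.mul_apply]
        _ = ∑ a₁, (X.adjMatrix ℂ ^ n) a a₁ • ∑ a', X.adjMatrix ℂ a₁ a' • u a' b' := by
            simp only [Finset.sum_smul, Finset.smul_sum, mul_smul]
            rw [Finset.sum_comm]
        _ = ∑ a₁, (X.adjMatrix ℂ ^ n) a a₁ • ∑ b₁, Y.adjMatrix ℂ b₁ b' • u a₁ b₁ := by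
            simp_rw [hAU]
        _ = ∑ b₁, Y.adjMatrix ℂ b₁ b' • ∑ a₁, (X.adjMatrix ℂ ^ n) a a₁ • u a₁ b₁ := by
            simp only [Finset.smul_sum, smul_smul]
            rw [Finset.sum_comm]
            exact Finset.sum_congr rfl fun _ _ => Finset.sum_congr rfl fun _ _ => by
              rw [mul_comm]
        _ = ∑ b₁, Y.adjMatrix ℂ b₁ b' • ∑ b₂, (Y.adjMatrix ℂ ^ n) b₂ b₁ • u a b₂ := by
            simp_rw [ih]
        _ = ∑ b₂, (∑ b₁, (Y.adjMatrix ℂ ^ n) b₂ b₁ * Y.adjMatrix ℂ b₁ b') • u a b₂ := by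
            simp only [Finset.smul_sum, smul_smul, Finset.sum_smul]
            rw [Finset.sum_comm]
            exact Finset.sum_congr rfl fun _ _ => Finset.sum_congr rfl fun _ _ => by
              rw [mul_comm]
        _ = ∑ b, (Y.adjMatrix ℂ ^ (n + 1)) b b' • u a b := by
            simp [pow_succ, Matrix.mul_apply]
  -- main entrywise equality
  have key : ∀ ℓ : ℕ, (X.adjMatrix ℂ ^ ℓ) x x' = (Y.adjMatrix ℂ ^ ℓ) y y' := by
    intro ℓ
    have h := congrArg (fun z => u x y * z * u x' y') (hpow ℓ x y')
    simp only [Finset.mul_sum, Finset.sum_mul, mul_smul_comm, smul_mul_assoc] at h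
    have hl : ∑ a', (X.adjMatrix ℂ ^ ℓ) x a' • (u x y * u a' y' * u x' y')
        = (X.adjMatrix ℂ ^ ℓ) x x' • (u x y * u x' y') := by
      rw [Finset.sum_eq_single x']
      · rw [mul_assoc, hidem]
      · intro a' _ ha'
        rw [mul_assoc, hcolorth y' ha', mul_zero, smul_zero]
      · simp
    have hr : ∑ b, (Y.adjMatrix ℂ ^ ℓ) b y' • (u x y * u x b * u x' y')
        = (Y.adjMatrix ℂ ^ ℓ) y y' • (u x y * u x' y') := by
      rw [Finset.sum_eq_single y]
      · rw [hidem]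
      · intro b _ hb
        rw [hroworth x (Ne.symm hb), zero_mul, smul_zero]
      · simp
    rw [hl, hr] at h
    have := sub_eq_zero.mpr h
    rw [← sub_smul] at this
    rcases smul_eq_zero.mp this with h0 | h0
    · exact sub_eq_zero.mp h0
    · exact absurd h0 hne
  refine ⟨key, ?_, ?_⟩
  · -- reachability
    have hwalk : ∀ ℓ : ℕ, (Fintype.card {p : X.Walk x x' // p.length = ℓ})
        = Fintype.card {p : Y.Walk y y' // p.length = ℓ} := by
      intro ℓ
      have h := key ℓ
      rw [SimpleGraph.adjMatrix_pow_apply_eq_card_walk, SimpleGraph.adjMatrix_pow_apply_eq_card_walk] at h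
      exact_mod_cast h
    constructor
    · rintro ⟨p⟩
      have : 0 < Fintype.card {q : Y.Walk y y' // q.length = p.length} := by
        rw [← hwalk]
        exact Fintype.card_pos_iff.mpr ⟨⟨p, rfl⟩⟩
      obtain ⟨⟨q, _⟩⟩ := Fintype.card_pos_iff.mp this
      exact ⟨q⟩
    · rintro ⟨p⟩
      have : 0 < Fintype.card {q : X.Walk x x' // q.length = p.length} := by
        rw [hwalk]
        exact Fintype.card_pos_iff.mpr ⟨⟨p, rfl⟩⟩
      obtain ⟨⟨q, _⟩⟩ := Fintype.card_pos_iff.mp this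
      exact ⟨q⟩
  · -- distance
    intro hXr
    have hwalk : ∀ ℓ : ℕ, (Fintype.card {p : X.Walk x x' // p.length = ℓ})
        = Fintype.card {p : Y.Walk y y' // p.length = ℓ} := by
      intro ℓ
      have h := key ℓ
      rw [SimpleGraph.adjMatrix_pow_apply_eq_card_walk, SimpleGraph.adjMatrix_pow_apply_eq_card_walk] at h
      exact_mod_cast h
    have hYr : Y.Reachable y y' := by
      obtain ⟨p⟩ := hXr
      have : 0 < Fintype.card {q : Y.Walk y y' // q.length = p.length} := by
        rw [← hwalk]
        exact Fintype.card_pos_iff.mpr ⟨⟨p, rfl⟩⟩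
      obtain ⟨⟨q, _⟩⟩ := Fintype.card_pos_iff.mp this
      exact ⟨q⟩
    apply le_antisymm
    · obtain ⟨q, hq⟩ := hYr.exists_walk_length_eq_dist
      have : 0 < Fintype.card {p : X.Walk x x' // p.length = q.length} := by
        rw [hwalk]
        exact Fintype.card_pos_iff.mpr ⟨⟨q, rfl⟩⟩
      obtain ⟨⟨p, hp⟩⟩ := Fintype.card_pos_iff.mp this
      calc X.dist x x' ≤ p.length := SimpleGraph.dist_le p
        _ = q.length := hp
        _ = Y.dist y y' := hq
    · obtain ⟨p, hp⟩ := hXr.exists_walk_length_eq_dist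
      have : 0 < Fintype.card {q : Y.Walk y y' // q.length = p.length} := by
        rw [← hwalk]
        exact Fintype.card_pos_iff.mpr ⟨⟨p, rfl⟩⟩
      obtain ⟨⟨q, hq⟩⟩ := Fintype.card_pos_iff.mp this
      calc Y.dist y y' ≤ q.length := SimpleGraph.dist_le q
        _ = p.length := hq
        _ = X.dist x x' := hp
end

section
/- Let X, Y, Z be finite simple graphs and A a unital C*-algebra. Let U = (u_{xy})_{x∈V(X), y∈V(Y)} and V = (v_{yz})_{y∈V(Y), z∈V(Z)} be magic unitaries over A such that every entry of U commutes with every entry of V, u_{xy}·u_{x'y'} = 0 whenever rel_X(x,x') ≠ rel_Y(y,y'), and v_{yz}·v_{y'z'} = 0 whenever rel_Y(y,y') ≠ rel_Z(z,z'). Define W = (w_{xz})_{x∈V(X), z∈V(Z)} by w_{xz} = ∑_{y∈V(Y)} u_{xy}·v_{yz}. Then W is a magic unitary over A, and w_{xz}·w_{x'z'} = 0 whenever rel_X(x,x') ≠ rel_Z(z,z'). -/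
open scoped Classical in
/-- `rel G v v'` records the relationship of two vertices: `0` if equal, `1` if adjacent,
`2` if distinct and non-adjacent. -/
noncomputable def rel {V : Type*} (G : SimpleGraph V) (v v' : V) : ℕ :=
  if v = v' then 0 else if G.Adj v v' then 1 else 2

/-- Quantum isomorphisms compose: if `u` is a magic unitary witnessing a
quantum isomorphism from `X` to `Y`, `v` one from `Y` to `Z`, and all entries of `u`
commute with all entries of `v`, then `w x z := ∑ y, u x y * v y z` is a magic unitary
witnessing a quantum isomorphism from `X` to `Z`. -/
theorem quantum_isomorphism_composes {A : Type*} [CStarAlgebra A]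
    {V₁ V₂ V₃ : Type*} [Fintype V₁] [Fintype V₂] [Fintype V₃]
    (X : SimpleGraph V₁) (Y : SimpleGraph V₂) (Z : SimpleGraph V₃)
    (u : V₁ → V₂ → A) (v : V₂ → V₃ → A)
    (hustar : ∀ x y, star (u x y) = u x y)
    (huidem : ∀ x y, u x y * u x y = u x y)
    (hurow : ∀ x, ∑ y, u x y = 1)
    (hucol : ∀ y, ∑ x, u x y = 1)
    (hvstar : ∀ y z, star (v y z) = v y z)
    (hvidem : ∀ y z, v y z * v y z = v y z)
    (hvrow : ∀ y, ∑ z, v y z = 1)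
    (hvcol : ∀ z, ∑ y, v y z = 1)
    (hcomm : ∀ x y y' z, u x y * v y' z = v y' z * u x y)
    (hurel : ∀ (x x' : V₁) (y y' : V₂), rel X x x' ≠ rel Y y y' → u x y * u x' y' = 0)
    (hvrel : ∀ (y y' : V₂) (z z' : V₃), rel Y y y' ≠ rel Z z z' → v y z * v y' z' = 0) :
    (∀ x z, star (∑ y, u x y * v y z) = ∑ y, u x y * v y z) ∧
    (∀ x z, (∑ y, u x y * v y z) * (∑ y, u x y * v y z) = ∑ y, u x y * v y z) ∧
    (∀ x, ∑ z, ∑ y, u x y * v y z = 1) ∧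
    (∀ z, ∑ x, ∑ y, u x y * v y z = 1) ∧
    (∀ (x x' : V₁) (z z' : V₃), rel X x x' ≠ rel Z z z' →
      (∑ y, u x y * v y z) * (∑ y, u x' y * v y z') = 0) := by
  have key : ∀ (x x' : V₁) (z z' : V₃) (y y' : V₂),
      (u x y * v y z) * (u x' y' * v y' z') = (u x y * u x' y') * (v y z * v y' z') := by
    intro x x' z z' y y'
    calc (u x y * v y z) * (u x' y' * v y' z')
        = u x y * (v y z * u x' y' * v y' z') := by simp [mul_assoc]
      _ = u x y * (u x' y' * v y z * v y' z') := by rw [← hcomm x' y' y z]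
      _ = (u x y * u x' y') * (v y z * v y' z') := by simp [mul_assoc]
  refine ⟨?_, ?_, ?_, ?_, ?_⟩
  · intro x z
    simp only [star_sum, star_mul, hustar, hvstar]
    exact Finset.sum_congr rfl fun y _ => (hcomm x y y z).symm
  · intro x z
    rw [Finset.sum_mul_sum]
    refine Finset.sum_congr rfl fun y _ => ?_
    rw [Finset.sum_eq_single y]
    · rw [key, huidem, hvidem]
    · intro y' _ hne
      rw [key, hurel x x y y' ?_, zero_mul]
      simp only [rel, if_pos rfl, if_neg hne.symm]
      split_ifs <;> simp
    · intro h; exact absurd (Finset.mem_univ y) h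
  · intro x
    rw [Finset.sum_comm]
    simp only [← Finset.mul_sum, hvrow, mul_one, hurow]
  · intro z
    rw [Finset.sum_comm]
    simp only [← Finset.sum_mul, hucol, one_mul, hvcol]
  · intro x x' z z' h
    rw [Finset.sum_mul_sum]
    refine Finset.sum_eq_zero fun y _ => Finset.sum_eq_zero fun y' _ => ?_
    rw [key]
    by_cases hr : rel X x x' = rel Y y y'
    · rw [hvrel y y' z z' (hr ▸ h), mul_zero]
    · rw [hurel x x' y y' hr, zero_mul]
end

section
/- Let X and Y be finite simple graphs on disjoint vertex sets, A a unital C*-algebra, and W = (w_{xy})_{x∈V(X), y∈V(Y)} a magic unitary over A with w_{xy}·w_{x'y'} = 0 whenever rel_X(x,x') ≠ rel_Y(y,y'). Let Z = X ⊔ Y be the disjoint union of X and Y. Define the matrix W̃ = (w̃_{zz'})_{z,z'∈V(Z)} by: w̃_{zz'} = w_{zz'} if z ∈ V(X) and z' ∈ V(Y); w̃_{zz'} = w_{z'z} if z ∈ V(Y) and z' ∈ V(X); and w̃_{zz'} = 0 if z and z' both lie in V(X) or both lie in V(Y). Then W̃ is a magic unitary over A indexed by V(Z), and w̃_{z₁z₁'}·w̃_{z₂z₂'}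 = 0 whenever rel_Z(z₁,z₂) ≠ rel_Z(z₁',z₂'). -/
lemma rel_sum_inl_inl {α β : Type*} (X : SimpleGraph α) (Y : SimpleGraph β) (a b : α) :
    rel (X ⊕g Y) (Sum.inl a) (Sum.inl b) = rel X a b := by
  by_cases hab : a = b
  · subst hab; simp [rel]
  · by_cases hadj : X.Adj a b <;> simp [rel, hab, hadj, SimpleGraph.sum_adj]

lemma rel_sum_inr_inr {α β : Type*} (X : SimpleGraph α) (Y : SimpleGraph β) (a b : β) :
    rel (X ⊕g Y) (Sum.inr a) (Sum.inr b) = rel Y a b := by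
  by_cases hab : a = b
  · subst hab; simp [rel]
  · by_cases hadj : Y.Adj a b <;> simp [rel, hab, hadj, SimpleGraph.sum_adj]

lemma rel_sum_inl_inr {α β : Type*} (X : SimpleGraph α) (Y : SimpleGraph β) (a : α) (b : β) :
    rel (X ⊕g Y) (Sum.inl a) (Sum.inr b) = 2 := by
  simp [rel, SimpleGraph.sum_adj]

lemma rel_sum_inr_inl {α β : Type*} (X : SimpleGraph α) (Y : SimpleGraph β) (a : β) (b : α) :
    rel (X ⊕g Y) (Sum.inr a) (Sum.inl b) = 2 := by
  simp [rel, SimpleGraph.sum_adj]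

/-- The matrix `W̃` on the disjoint union built from a magic unitary `w` indexed by
`V(X) × V(Y)`: it is `w` between the two parts and `0` within each part. -/
def tildeW {A : Type*} [CStarAlgebra A] {V W : Type*} (w : V → W → A) :
    V ⊕ W → V ⊕ W → A := fun z z' =>
  match z, z' with
  | Sum.inl x, Sum.inr y => w x y
  | Sum.inr y, Sum.inl x => w x y
  | Sum.inl _, Sum.inl _ => 0
  | Sum.inr _, Sum.inr _ => 0

/-- If `w` is a magic unitary witnessing a quantum isomorphism of `X`
and `Y`, then `W̃` is a magic unitary indexed by the disjoint union `Z = X ⊕g Y` and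
satisfies `w̃ z₁ z₁' * w̃ z₂ z₂' = 0` whenever `rel Z z₁ z₂ ≠ rel Z z₁' z₂'`. -/
theorem tildeW_is_magic_unitary {A : Type*} [CStarAlgebra A]
    {V W : Type*} [Fintype V] [Fintype W]
    (X : SimpleGraph V) (Y : SimpleGraph W)
    (w : V → W → A)
    (hstar : ∀ x y, star (w x y) = w x y)
    (hidem : ∀ x y, w x y * w x y = w x y)
    (hrow : ∀ x, ∑ y, w x y = 1)
    (hcol : ∀ y, ∑ x, w x y = 1)
    (hrel : ∀ (x x' : V) (y y' : W), rel X x x' ≠ rel Y y y' → w x y * w x' y' = 0) :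
    (∀ z z', star (tildeW w z z') = tildeW w z z') ∧
    (∀ z z', tildeW w z z' * tildeW w z z' = tildeW w z z') ∧
    (∀ z, ∑ z', tildeW w z z' = 1) ∧
    (∀ z', ∑ z, tildeW w z z' = 1) ∧
    (∀ z₁ z₁' z₂ z₂' : V ⊕ W, rel (X ⊕g Y) z₁ z₂ ≠ rel (X ⊕g Y) z₁' z₂' →
      tildeW w z₁ z₁' * tildeW w z₂ z₂' = 0) := by
  refine ⟨?_, ?_, ?_, ?_, ?_⟩
  · rintro (x | y) (x' | y') <;> simp [tildeW, hstar]
  · rintro (x | y) (x' | y') <;> simp [tildeW, hidem]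
  · rintro (x | y) <;> simp [tildeW, Fintype.sum_sum_type, hrow, hcol]
  · rintro (x | y) <;> simp [tildeW, Fintype.sum_sum_type, hrow, hcol]
  · rintro (x₁ | y₁) (x₁' | y₁') (x₂ | y₂) (x₂' | y₂') h <;>
      simp only [tildeW, zero_mul, mul_zero]
    · rw [rel_sum_inl_inl, rel_sum_inr_inr] at h
      exact hrel _ _ _ _ h
    · rw [rel_sum_inl_inr, rel_sum_inr_inl] at h
      exact absurd rfl h
    · rw [rel_sum_inr_inl, rel_sum_inl_inr] at h
      exact absurd rfl h
    · rw [rel_sum_inr_inr, rel_sum_inl_inl] at h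
      exact hrel _ _ _ _ (Ne.symm h)
end

section
/- Let X and Y be connected finite simple graphs on disjoint vertex sets and let Z = X ⊔ Y be their disjoint union, with complex adjacency matrix A_Z. Let A be a unital C*-algebra and U = (u_{zz'})_{z,z'∈V(Z)} a magic unitary over A with A_Z·U = U·A_Z. Then: (a) u_{xy}·u_{x'x''} = 0 for all x, x', x'' ∈ V(X) and all y ∈ V(Y); and (b) the projections p_x := ∑_{y∈V(Y)} u_{xy} satisfy p_x = p_{x'} for all x, x' ∈ V(X). -/
open Finset in
/-- Projections summing to one are pairwise orthogonal. -/
lemma magic_row_orth_s15 {A : Type*} [CStarAlgebra A] {ι : Type*} [Fintype ι] [DecidableEq ι]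
    (f : ι → A) (hstar : ∀ i, star (f i) = f i) (hidem : ∀ i, f i * f i = f i)
    (hsum : ∑ i, f i = 1) : ∀ i j, i ≠ j → f i * f j = 0 := by
  letI := CStarAlgebra.spectralOrder A
  haveI := CStarAlgebra.spectralOrderedRing A
  intro i j hij
  have herase : ∑ k ∈ Finset.univ.erase i, f k = 1 - f i := by
    have h := Finset.add_sum_erase Finset.univ f (Finset.mem_univ i)
    rw [hsum] at h
    exact eq_sub_of_add_eq' h
  have hsum0 : ∑ k ∈ Finset.univ.erase i, f i * f k * f i = 0 := by
    rw [← Finset.sum_mul, ← Finset.mul_sum, herase, mul_sub, mul_one, hidem i,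
      sub_self, zero_mul]
  have hterm : ∀ k ∈ Finset.univ.erase i, f i * f k * f i = 0 := by
    refine (Finset.sum_eq_zero_iff_of_nonneg ?_).mp hsum0
    intro k _
    have hh : star (f k * f i) * (f k * f i) = f i * f k * f i := by
      rw [star_mul, hstar, hstar]
      simp only [mul_assoc]
      rw [← mul_assoc (f k), hidem k]
    rw [← hh]
    exact star_mul_self_nonneg _
  have hji : f j * f i = 0 := by
    have h0 := hterm j (Finset.mem_erase.mpr ⟨fun h => hij h.symm, Finset.mem_univ j⟩)
    have hh : star (f j * f i) * (f j * f i) = f i * f j * f i := by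
      rw [star_mul, hstar, hstar]
      simp only [mul_assoc]
      rw [← mul_assoc (f j), hidem j]
    rw [← hh] at h0
    exact (CStarRing.star_mul_self_eq_zero_iff _).mp h0
  calc f i * f j = star (f j * f i) := by rw [star_mul, hstar, hstar]
  _ = 0 := by rw [hji, star_zero]

open scoped Classical in
/-- Let `X`, `Y` be connected graphs, `Z = X ⊕g Y` their disjoint union,
and `U = (u z z')` a magic unitary over a unital C*-algebra commuting with the adjacency
matrix of `Z`. Then (a) `u x y * u x' x'' = 0` for `x, x', x'' ∈ V(X)`, `y ∈ V(Y)`; and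
(b) the projections `p x := ∑ y, u x y` all coincide. -/
theorem disjoint_union_block_structure {A : Type*} [CStarAlgebra A]
    {V W : Type*} [Fintype V] [Fintype W]
    (X : SimpleGraph V) (Y : SimpleGraph W)
    (hX : X.Connected) (hY : Y.Connected)
    (u : V ⊕ W → V ⊕ W → A)
    (hstar : ∀ z z', star (u z z') = u z z')
    (hidem : ∀ z z', u z z' * u z z' = u z z')
    (hrow : ∀ z, ∑ z', u z z' = 1)
    (hcol : ∀ z', ∑ z, u z z' = 1)
    (hAU : ∀ a b : V ⊕ W,
      ∑ c, (X ⊕g Y).adjMatrix ℂ a c • u c b = ∑ c, (X ⊕g Y).adjMatrix ℂ c b • u a c) :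
    (∀ (x x' x'' : V) (y : W),
        u (Sum.inl x) (Sum.inr y) * u (Sum.inl x') (Sum.inl x'') = 0) ∧
    (∀ x x' : V,
        ∑ y, u (Sum.inl x) (Sum.inr y) = ∑ y, u (Sum.inl x') (Sum.inr y)) := by
  letI := CStarAlgebra.spectralOrder A
  haveI := CStarAlgebra.spectralOrderedRing A
  -- row orthogonality
  have row_orth : ∀ z z₁ z₂, z₁ ≠ z₂ → u z z₁ * u z z₂ = 0 := fun z =>
    magic_row_orth_s15 (u z) (hstar z) (hidem z) (hrow z)
  -- key orthogonality relation from the intertwining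
  have key : ∀ a b d : V ⊕ W, ¬ (X ⊕g Y).Adj b d → ∀ c, (X ⊕g Y).Adj a c →
      u a b * u c d = 0 := by
    intro a b d hbd c hac
    have h1 := hAU a d
    have h2 : ∑ c', (X ⊕g Y).adjMatrix ℂ a c' • (u a b * u c' d * u a b)
        = ∑ c', (X ⊕g Y).adjMatrix ℂ c' d • (u a b * u a c' * u a b) := by
      have := congrArg (fun t => u a b * t * u a b) h1
      simpa only [Finset.mul_sum, Finset.sum_mul, mul_smul_comm, smul_mul_assoc,
        mul_assoc] using this
    have h3 : ∑ c', (X ⊕g Y).adjMatrix ℂ c' d • (u a b * u a c' * u a b) = 0 := by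
      rw [Finset.sum_eq_single b]
      · rw [SimpleGraph.adjMatrix_apply, if_neg hbd, zero_smul]
      · intro c' _ hc'
        rw [row_orth a b c' (fun h => hc' h.symm), zero_mul, smul_zero]
      · intro h; exact absurd (Finset.mem_univ b) h
    rw [h3] at h2
    have h4 : ∀ c' ∈ Finset.univ, (X ⊕g Y).adjMatrix ℂ a c' • (u a b * u c' d * u a b) = 0 := by
      refine (Finset.sum_eq_zero_iff_of_nonneg ?_).mp h2
      intro c' _
      rw [SimpleGraph.adjMatrix_apply]
      by_cases h : (X ⊕g Y).Adj a c'
      · rw [if_pos h, one_smul]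
        have hh : star (u c' d * u a b) * (u c' d * u a b) = u a b * u c' d * u a b := by
          rw [star_mul, hstar, hstar]
          simp only [mul_assoc]
          rw [← mul_assoc (u c' d), hidem c' d]
        rw [← hh]; exact star_mul_self_nonneg _
      · rw [if_neg h, zero_smul]
    have h5 : u a b * u c d * u a b = 0 := by
      have := h4 c (Finset.mem_univ c)
      rwa [SimpleGraph.adjMatrix_apply, if_pos hac, one_smul] at this
    have h6 : u c d * u a b = 0 := by
      have hh : star (u c d * u a b) * (u c d * u a b) = u a b * u c d * u a b := by
        rw [star_mul, hstar, hstar]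
        simp only [mul_assoc]
        rw [← mul_assoc (u c d), hidem c d]
      rw [← hh] at h5
      exact (CStarRing.star_mul_self_eq_zero_iff _).mp h5
    calc u a b * u c d = star (u c d * u a b) := by rw [star_mul, hstar, hstar]
    _ = 0 := by rw [h6, star_zero]
  -- cross pairs are never adjacent
  have cross : ∀ (y : W) (v : V), ¬ (X ⊕g Y).Adj (Sum.inr y) (Sum.inl v) := by
    intro y v h; simp [SimpleGraph.sum] at h
  -- orthogonality for adjacent x x'
  have adj_orth : ∀ x x' : V, X.Adj x x' → ∀ (y : W) (x'' : V),
      u (Sum.inl x) (Sum.inr y) * u (Sum.inl x') (Sum.inl x'') = 0 := by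
    intro x x' hxx' y x''
    exact key (Sum.inl x) (Sum.inr y) (Sum.inl x'') (cross y x'') (Sum.inl x') hxx'
  -- the projections p and q
  set p : V → A := fun x => ∑ y, u (Sum.inl x) (Sum.inr y) with hp
  set q : V → A := fun x => ∑ v, u (Sum.inl x) (Sum.inl v) with hq
  have hpq : ∀ x, q x + p x = 1 := by
    intro x
    have := hrow (Sum.inl x)
    rwa [Fintype.sum_sum_type] at this
  have hpstar : ∀ x, star (p x) = p x := by
    intro x
    simp only [hp, star_sum]
    exact Finset.sum_congr rfl fun y _ => hstar _ _
  -- for adjacent x x' : p x * p x' = p x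
  have hadj_pq : ∀ x x', X.Adj x x' → p x * q x' = 0 := by
    intro x x' h
    rw [hp, hq]
    rw [Finset.sum_mul]
    refine Finset.sum_eq_zero fun y _ => ?_
    rw [Finset.mul_sum]
    exact Finset.sum_eq_zero fun v _ => adj_orth x x' h y v
  have hadj_pp : ∀ x x', X.Adj x x' → p x * p x' = p x := by
    intro x x' h
    have := congrArg (fun t => p x * t) (hpq x')
    simp only [mul_add, mul_one] at this
    rw [hadj_pq x x' h, zero_add] at this
    exact this
  have hadj_eq : ∀ x x', X.Adj x x' → p x = p x' := by
    intro x x' h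
    have h1 : p x * p x' = p x := hadj_pp x x' h
    have h2 : p x' * p x = p x' := hadj_pp x' x h.symm
    have h3 : p x * p x' = p x' := by
      have h4 := congrArg star h2
      simp only [star_mul, hpstar] at h4
      exact h4
    exact h1.symm.trans h3
  -- connectivity gives p constant
  have hconst : ∀ x x' : V, p x = p x' := by
    intro x x'
    obtain ⟨w⟩ := hX x x'
    induction w with
    | nil => rfl
    | cons h _ ih => exact (hadj_eq _ _ h).trans ih
  refine ⟨?_, fun x x' => hconst x x'⟩
  -- part (a) in general
  intro x x' x'' y
  have hup : u (Sum.inl x) (Sum.inr y) * p x = u (Sum.inl x) (Sum.inr y) := by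
    rw [hp, Finset.mul_sum]
    rw [Finset.sum_eq_single y]
    · exact hidem _ _
    · intro y' _ hy'
      exact row_orth (Sum.inl x) (Sum.inr y) (Sum.inr y')
        (fun hh => hy' (Sum.inr.inj hh).symm)
    · intro h; exact absurd (Finset.mem_univ y) h
  have hqu : q x' * u (Sum.inl x') (Sum.inl x'') = u (Sum.inl x') (Sum.inl x'') := by
    rw [hq, Finset.sum_mul]
    rw [Finset.sum_eq_single x'']
    · exact hidem _ _
    · intro v _ hv
      exact row_orth (Sum.inl x') (Sum.inl v) (Sum.inl x'')
        (fun hh => hv (Sum.inl.inj hh))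
    · intro h; exact absurd (Finset.mem_univ x'') h
  have hpu : p x' * u (Sum.inl x') (Sum.inl x'') = 0 := by
    have h1 := congrArg (fun t => t * u (Sum.inl x') (Sum.inl x'')) (hpq x')
    simp only [add_mul, one_mul] at h1
    rw [hqu] at h1
    exact add_eq_left.mp h1
  calc u (Sum.inl x) (Sum.inr y) * u (Sum.inl x') (Sum.inl x'')
      = u (Sum.inl x) (Sum.inr y) * p x * u (Sum.inl x') (Sum.inl x'') := by rw [hup]
  _ = u (Sum.inl x) (Sum.inr y) * (p x' * u (Sum.inl x') (Sum.inl x'')) := by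
      rw [hconst x x', mul_assoc]
  _ = 0 := by rw [hpu, mul_zero]
end

section
/- Let Z be a finite simple graph and let F be a set of edges of Z such that every vertex of Z is incident to an even number of edges in F (i.e., F is the edge set of an even subgraph of Z). Then the map (ℓ, S) ↦ (ℓ, S △ (E_ℓ ∩ F)) is an automorphism of the graph X_0(Z), where △ denotes symmetric difference of sets. -/
open scoped symmDiff
/-- The graph `X₀(Z)`: vertices are pairs `(ℓ, S)` with `S` an even-cardinality set of
edges of `Z` incident to `ℓ`; `(ℓ, S)` and `(k, T)` are adjacent iff `ℓ` is adjacent to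
`k` in `Z` and the edge `{ℓ, k}` lies in exactly one of `S` and `T`. -/
def X0 {V : Type*} [DecidableEq V] (Z : SimpleGraph V) :
    SimpleGraph {p : V × Finset (Sym2 V) // ↑p.2 ⊆ Z.incidenceSet p.1 ∧ Even p.2.card} where
  Adj p q := Z.Adj p.1.1 q.1.1 ∧ Xor' (s(p.1.1, q.1.1) ∈ p.1.2) (s(p.1.1, q.1.1) ∈ q.1.2)
  symm := by
    refine ⟨?_⟩
    rintro ⟨⟨l, S⟩, _⟩ ⟨⟨k, T⟩, _⟩ ⟨hadj, hx⟩
    refine ⟨hadj.symm, ?_⟩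
    rw [Sym2.eq_swap]
    simp only [Xor'] at hx ⊢
    first
      | exact hx.symm
      | exact Xor.symm hx
      | (rw [xor_comm]; exact hx)
      | (simp only [Xor, xor_iff_or_and_not_and] at hx ⊢; tauto)
  loopless := by
    refine ⟨?_⟩
    rintro ⟨⟨l, S⟩, _⟩ ⟨hadj, _⟩
    exact hadj.ne rfl

lemma even_card_symmDiff {α : Type*} [DecidableEq α] {s t : Finset α}
    (hs : Even s.card) (ht : Even t.card) : Even ((s ∆ t).card) := by
  have h1 := Finset.card_sdiff_add_card_inter s t
  have h2 := Finset.card_sdiff_add_card_inter t s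
  have hcomm : (t ∩ s).card = (s ∩ t).card := by rw [Finset.inter_comm]
  have hd : (s ∆ t).card = (s \ t).card + (t \ s).card := by
    rw [symmDiff_def, Finset.sup_eq_union, Finset.card_union_of_disjoint]
    exact disjoint_sdiff_sdiff
  obtain ⟨a, ha⟩ := hs
  obtain ⟨b, hb⟩ := ht
  rw [Nat.even_iff]
  omega

/-- If `F` is the edge set of an even subgraph of `Z` (every vertex is
incident to an even number of edges of `F`), then `(ℓ, S) ↦ (ℓ, S ∆ (E_ℓ ∩ F))` is an
automorphism of `X₀(Z)`. -/
theorem X0_automorphism_of_even_subgraph {V : Type*} [Fintype V] [DecidableEq V]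
    (Z : SimpleGraph V) [DecidableRel Z.Adj]
    (F : Finset (Sym2 V)) (hF : ↑F ⊆ Z.edgeSet)
    (heven : ∀ v : V, Even (F.filter (fun e => v ∈ e)).card) :
    ∃ φ : X0 Z ≃g X0 Z,
      ∀ p : {p : V × Finset (Sym2 V) // ↑p.2 ⊆ Z.incidenceSet p.1 ∧ Even p.2.card},
        (φ p).val = (p.val.1, p.val.2 ∆ (Z.incidenceFinset p.val.1 ∩ F)) := by
  have hAeq : ∀ v : V, Z.incidenceFinset v ∩ F = F.filter (fun e => v ∈ e) := by
    intro v
    ext e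
    simp only [Finset.mem_inter, Finset.mem_filter, SimpleGraph.mem_incidenceFinset,
      SimpleGraph.incidenceSet, Set.mem_setOf_eq, Set.mem_sep_iff]
    constructor
    · rintro ⟨⟨_, hv⟩, hf⟩; exact ⟨hf, hv⟩
    · rintro ⟨hf, hv⟩; exact ⟨⟨hF hf, hv⟩, hf⟩
  -- the underlying map
  set f : {p : V × Finset (Sym2 V) // ↑p.2 ⊆ Z.incidenceSet p.1 ∧ Even p.2.card} →
      {p : V × Finset (Sym2 V) // ↑p.2 ⊆ Z.incidenceSet p.1 ∧ Even p.2.card} :=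
    fun p => ⟨(p.val.1, p.val.2 ∆ (Z.incidenceFinset p.val.1 ∩ F)), by
      constructor
      · intro e he
        simp only [Finset.coe_symmDiff, Set.mem_symmDiff, Finset.mem_coe] at he
        rcases he with ⟨h, _⟩ | ⟨h, _⟩
        · exact p.prop.1 h
        · have := (Finset.mem_inter.mp h).1
          rwa [SimpleGraph.mem_incidenceFinset] at this
      · refine even_card_symmDiff p.prop.2 ?_
        rw [hAeq]
        exact heven _⟩ with hf
  have hinv : Function.Involutive f := by
    intro p
    apply Subtype.ext
    simp only [hf]
    exact Prod.ext rfl (symmDiff_symmDiff_cancel_right _ _)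
  have hmem : ∀ (l k : V) (S : Finset (Sym2 V)), Z.Adj l k →
      (s(l, k) ∈ S ∆ (Z.incidenceFinset l ∩ F) ↔ Xor' (s(l, k) ∈ S) (s(l, k) ∈ F)) := by
    intro l k S hadj
    have hinc : s(l, k) ∈ Z.incidenceFinset l := by
      rw [SimpleGraph.mem_incidenceFinset]
      exact Z.mk'_mem_incidenceSet_iff.mpr ⟨hadj, Or.inl rfl⟩
    simp only [Finset.mem_symmDiff, Finset.mem_inter, Xor', Xor]
    tauto
  have hadjpres : ∀ p q, (X0 Z).Adj p q → (X0 Z).Adj (f p) (f q) := by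
    rintro ⟨⟨l, S⟩, hp⟩ ⟨⟨k, T⟩, hq⟩ ⟨hadj, hx⟩
    refine ⟨hadj, ?_⟩
    simp only [hf]
    rw [hmem l k S hadj]
    have hk : s(l, k) ∈ T ∆ (Z.incidenceFinset k ∩ F) ↔ Xor' (s(l, k) ∈ T) (s(l, k) ∈ F) := by
      rw [Sym2.eq_swap]
      exact hmem k l T hadj.symm
    rw [hk]
    simp only [Xor', Xor] at hx ⊢
    tauto
  refine ⟨⟨hinv.toPerm f, ?_⟩, fun p => rfl⟩
  intro p q
  constructor
  · intro h
    have := hadjpres _ _ h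
    simp only [Function.Involutive.coe_toPerm] at this h
    rwa [hinv p, hinv q] at this
  · exact hadjpres p q
end
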